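/- arXiv:0812.2229 — 11 statements merged into one kernel-verified Lean document; each statement's English description precedes it below -/
import Mathlib

section
/- Let (𝔫, ⟨·,·⟩) be a nonabelian metric nilpotent Lie algebra and let B = {x_1, …, x_n} be an orthogonal basis with q_i = ⟨x_i, x_i⟩. Then for every i = 1, …, n, ric(x_i, x_i)/q_i = −(1/2) Σ_{(j,k,l) ∈ Λ_B} (q_l/(q_j q_k)) (α_{jk}^l)² (y_{jk}^l)_i; equivalently, the Ricci vector (ric(x_1,x_1)/q_1, …, ric(x_n,x_n)/q_n) equals −(1/2) aᵀ Y, where a is the structure vector and Y the root matrix of (𝔫, ⟨·,·⟩) relative to B. -/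
/-- Structure constants of a Lie algebra relative to a basis `b`:
`⁅b j, b k⁆ = ∑ l, structConst b j k l • b l`. -/
noncomputable def structConst {n : ℕ} {L : Type} [LieRing L] [LieAlgebra ℝ L]
    (b : Module.Basis (Fin n) ℝ L) (j k l : Fin n) : ℝ := b.repr ⁅b j, b k⁆ l

/-- The root vector `y_{jk}^l = e_j + e_k - e_l ∈ ℝⁿ`. -/
noncomputable def rootVector {n : ℕ} (j k l : Fin n) (i : Fin n) : ℝ :=
  (if i = j then (1:ℝ) else 0) + (if i = k then 1 else 0) - (if i = l then 1 else 0)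

/-- The dictionary order on index triples. -/
def dictLt {n : ℕ} (t t' : Fin n × Fin n × Fin n) : Prop :=
  t.1 < t'.1 ∨ (t.1 = t'.1 ∧ (t.2.1 < t'.2.1 ∨ (t.2.1 = t'.2.1 ∧ t.2.2 < t'.2.2)))

/-- `σ : Fin m → (Fin n)³` enumerates, in dictionary order, the set
`Λ_B = {(j,k,l) : α_{jk}^l ≠ 0, j < k}` of index triples of nonzero
structure constants of the Lie algebra relative to the basis `b`
(in particular `m = |Λ_B|`). -/
def IsEnumerationOfLambda {n m : ℕ} {L : Type} [LieRing L] [LieAlgebra ℝ L]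
    (b : Module.Basis (Fin n) ℝ L) (σ : Fin m → Fin n × Fin n × Fin n) : Prop :=
  (∀ t : Fin n × Fin n × Fin n,
      (t.1 < t.2.1 ∧ structConst b t.1 t.2.1 t.2.2 ≠ 0) ↔ (∃ r, σ r = t)) ∧
  (∀ r r' : Fin m, r < r' → dictLt (σ r) (σ r'))

/-- The `m × n` root matrix `Y`, whose `r`-th row is the root vector of the
`r`-th triple of `Λ_B`. -/
noncomputable def rootMatrix {n m : ℕ} (σ : Fin m → Fin n × Fin n × Fin n) :
    Matrix (Fin m) (Fin n) ℝ :=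
  Matrix.of fun r i => rootVector (σ r).1 (σ r).2.1 (σ r).2.2 i

/-- The `m × m` Gram matrix `U = Y Yᵀ`. -/
noncomputable def gramMatrix {n m : ℕ} (σ : Fin m → Fin n × Fin n × Fin n) :
    Matrix (Fin m) (Fin m) ℝ :=
  rootMatrix σ * (rootMatrix σ).transpose

/-- The structure vector: its `r`-th entry is `(q_l/(q_j q_k)) (α_{jk}^l)²`,
where `(j,k,l)` is the `r`-th triple of `Λ_B` and `q_i` are the diagonal
metric coefficients. -/
noncomputable def structVector {n m : ℕ} {L : Type} [LieRing L] [LieAlgebra ℝ L]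
    (b : Module.Basis (Fin n) ℝ L) (σ : Fin m → Fin n × Fin n × Fin n)
    (q : Fin n → ℝ) (r : Fin m) : ℝ :=
  q (σ r).2.2 / (q (σ r).1 * q (σ r).2.1) *
    (structConst b (σ r).1 (σ r).2.1 (σ r).2.2) ^ 2

/-- The Ricci form `ric(x,y) = -(1/2)⟨ad x, ad y⟩ + (1/4)⟨J x, J y⟩`, where the
inner product on endomorphisms is `⟨A, B⟩ = tr (A ∘ B*)`; it is expressed here
through a given adjoint operation `adj` (characterized by
`Q (adj A x) y = Q x (A y)`) and a given map `J` (characterized by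
`Q (J x y) z = Q x ⁅y, z⁆`). -/
noncomputable def ricForm {L : Type} [LieRing L] [LieAlgebra ℝ L]
    (adj : (L →ₗ[ℝ] L) → (L →ₗ[ℝ] L)) (J : L → L →ₗ[ℝ] L) (x y : L) : ℝ :=
  -(1/2) * LinearMap.trace ℝ L ((LieAlgebra.ad ℝ L x) ∘ₗ adj (LieAlgebra.ad ℝ L y))
    + (1/4) * LinearMap.trace ℝ L ((J x) ∘ₗ adj (J y))

/-- Symmetrization: a sum over `j < k` of a function symmetric in `(j,k)` and
vanishing on the diagonal is half the full sum. -/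
lemma sum_triple_lt {n : ℕ} (f : Fin n × Fin n × Fin n → ℝ)
    (hsym : ∀ t : Fin n × Fin n × Fin n, f (t.2.1, t.1, t.2.2) = f t)
    (hdiag : ∀ t : Fin n × Fin n × Fin n, t.1 = t.2.1 → f t = 0) :
    ∑ t ∈ Finset.univ.filter (fun t => t.1 < t.2.1), f t = (1/2) * ∑ t, f t := by
  have key : ∑ t ∈ Finset.univ.filter (fun t => t.1 < t.2.1), f t
      = ∑ t ∈ Finset.univ.filter (fun t => ¬ t.1 < t.2.1), f t := by
    rw [Finset.sum_filter, Finset.sum_filter]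
    let e : (Fin n × Fin n × Fin n) ≃ (Fin n × Fin n × Fin n) :=
      ⟨fun t => (t.2.1, t.1, t.2.2), fun t => (t.2.1, t.1, t.2.2),
        fun t => rfl, fun t => rfl⟩
    refine Fintype.sum_equiv e _ _ ?_
    intro t
    show (if t.1 < t.2.1 then f t else 0)
        = if ¬ t.2.1 < t.1 then f (t.2.1, t.1, t.2.2) else 0
    rcases lt_trichotomy t.1 t.2.1 with h | h | h
    · rw [if_pos h, if_pos (not_lt.2 h.le), hsym]
    · rw [if_neg (by simp [h]), if_pos (by simp [h]),
        hdiag (t.2.1, t.1, t.2.2) h.symm]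
    · rw [if_neg (by simp [h.le, not_lt]), if_neg (by simp [h])]
  have total := Finset.sum_filter_add_sum_filter_not Finset.univ
    (fun t : Fin n × Fin n × Fin n => t.1 < t.2.1) f
  rw [← key] at total
  linarith


/-- Let `(𝔫, Q)` be a nonabelian metric nilpotent Lie algebra
with orthogonal basis `B = {x_1, …, x_n}` and `q_i = Q(x_i, x_i)`.  Then for
every `i`, `ric(x_i, x_i)/q_i = -(1/2) Σ_{(j,k,l) ∈ Λ_B} (q_l/(q_j q_k))
(α_{jk}^l)² (y_{jk}^l)_i`, i.e. the Ricci vector equals `-(1/2) aᵀ Y`. -/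
theorem stmt0
    {n m : ℕ} {L : Type} [LieRing L] [LieAlgebra ℝ L]
    [LieRing.IsNilpotent L]
    -- the inner product
    (Q : L →ₗ[ℝ] L →ₗ[ℝ] ℝ)
    (hQsymm : ∀ x y, Q x y = Q y x)
    (hQpos : ∀ x, x ≠ 0 → 0 < Q x x)
    -- nonabelian
    (hnonab : ∃ x y : L, ⁅x, y⁆ ≠ 0)
    -- orthogonal basis
    (b : Module.Basis (Fin n) ℝ L)
    (hb : ∀ i j, i ≠ j → Q (b i) (b j) = 0)
    -- enumeration of Λ_B in dictionary order
    (σ : Fin m → Fin n × Fin n × Fin n)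
    (hσ : IsEnumerationOfLambda b σ)
    -- the Q-adjoint operation on endomorphisms
    (adj : (L →ₗ[ℝ] L) → (L →ₗ[ℝ] L))
    (hadj : ∀ (A : L →ₗ[ℝ] L) (x y : L), Q (adj A x) y = Q x (A y))
    -- the map J, characterized by `⟨J_x y, z⟩ = ⟨x, ⁅y, z⁆⟩`
    (J : L → L →ₗ[ℝ] L)
    (hJ : ∀ x y z, Q (J x y) z = Q x ⁅y, z⁆) :
    ∀ i : Fin n,
      ricForm adj J (b i) (b i) / Q (b i) (b i)
        = -(1/2) * ∑ r : Fin m,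
            structVector b σ (fun i' => Q (b i') (b i')) r * rootMatrix σ r i := by
  intro i
  haveI : Module.Finite ℝ L := Module.Finite.of_basis b
  haveI : Module.Free ℝ L := Module.Free.of_basis b
  set q : Fin n → ℝ := fun i' => Q (b i') (b i') with hqdef
  have hq : ∀ j, q j ≠ 0 := fun j => ne_of_gt (hQpos _ (b.ne_zero j))
  set α : Fin n → Fin n → Fin n → ℝ := structConst b with hα
  -- basic coordinate formula
  have hQb : ∀ (l : Fin n) (x : L), Q (b l) x = b.repr x l * q l := by
    intro l x
    conv_lhs => rw [← b.sum_repr x]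
    rw [map_sum]
    rw [Finset.sum_eq_single l]
    · rw [map_smul]; simp [q]
    · intro j _ hj
      rw [map_smul, hb l j (Ne.symm hj)]; simp
    · intro h; exact absurd (Finset.mem_univ l) h
  have hrepr : ∀ (l : Fin n) (x : L), b.repr x l = Q (b l) x / q l := by
    intro l x
    rw [hQb l x, mul_div_assoc, div_self (hq l), mul_one]
  -- expansion of Q in coordinates
  have hQxy : ∀ x y : L, Q x y = ∑ l, b.repr x l * b.repr y l * q l := by
    intro x y
    conv_lhs => rw [← b.sum_repr x]
    rw [map_sum, LinearMap.sum_apply]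
    refine Finset.sum_congr rfl fun l _ => ?_
    rw [map_smul, LinearMap.smul_apply, hQb l y, smul_eq_mul, mul_assoc]
  -- trace formula
  have htrace : ∀ C : L →ₗ[ℝ] L,
      LinearMap.trace ℝ L C = ∑ k, b.repr (C (b k)) k := by
    intro C
    rw [LinearMap.trace_eq_matrix_trace ℝ b C, Matrix.trace]
    simp [LinearMap.toMatrix_apply, Matrix.diag]
  have htradj : ∀ A B : L →ₗ[ℝ] L,
      LinearMap.trace ℝ L (A ∘ₗ adj B) = ∑ k, Q (A (b k)) (B (b k)) / q k := by
    intro A B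
    rw [LinearMap.trace_comp_comm' (adj B) A, htrace]
    refine Finset.sum_congr rfl fun k _ => ?_
    rw [LinearMap.comp_apply, hrepr, hQsymm, hadj]
  -- structure constants facts
  have hαskew : ∀ j k l, α k j l = - α j k l := by
    intro j k l
    show structConst b k j l = - structConst b j k l
    unfold structConst
    have h : ⁅b k, b j⁆ = -⁅b j, b k⁆ := (lie_skew (b k) (b j)).symm
    rw [h, map_neg]
    simp
  have hαdiag : ∀ j l, α j j l = 0 := by
    intro j l
    show structConst b j j l = 0
    unfold structConst
    simp
  -- repr of ad and J
  have hadrepr : ∀ k l, b.repr ((LieAlgebra.ad ℝ L (b i)) (b k)) l = α i k l := by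
    intro k l; simp [LieAlgebra.ad_apply, hα, structConst]
  have hJrepr : ∀ k l, b.repr (J (b i) (b k)) l = α k l i * q i / q l := by
    intro k l
    rw [hrepr, hQsymm, hJ, hQb i ⁅b k, b l⁆]
    rfl
  -- the two traces
  set S1 : ℝ := ∑ k, ∑ l, α i k l ^ 2 * q l / q k with hS1
  set S2 : ℝ := ∑ k, ∑ l, α k l i ^ 2 / (q k * q l) with hS2
  have hT1 : LinearMap.trace ℝ L
      ((LieAlgebra.ad ℝ L (b i)) ∘ₗ adj (LieAlgebra.ad ℝ L (b i))) = S1 := by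
    rw [htradj, hS1]
    refine Finset.sum_congr rfl fun k _ => ?_
    rw [hQxy, Finset.sum_div]
    refine Finset.sum_congr rfl fun l _ => ?_
    rw [hadrepr]; ring
  have hT2 : LinearMap.trace ℝ L ((J (b i)) ∘ₗ adj (J (b i))) = q i ^ 2 * S2 := by
    rw [htradj, hS2, Finset.mul_sum]
    refine Finset.sum_congr rfl fun k _ => ?_
    rw [hQxy, Finset.sum_div, Finset.mul_sum]
    refine Finset.sum_congr rfl fun l _ => ?_
    rw [hJrepr]
    have hk := hq k; have hl := hq l
    field_simp
  -- the summand on the RHS as a function of the triple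
  set g : Fin n × Fin n × Fin n → ℝ := fun t =>
    q t.2.2 / (q t.1 * q t.2.1) * (α t.1 t.2.1 t.2.2) ^ 2
      * rootVector t.1 t.2.1 t.2.2 i with hg
  -- step 1 : σ-sum equals sum over Λ
  have hΛ : ∑ r : Fin m, structVector b σ q r * rootMatrix σ r i
      = ∑ t ∈ Finset.univ.filter
          (fun t : Fin n × Fin n × Fin n => t.1 < t.2.1 ∧ α t.1 t.2.1 t.2.2 ≠ 0), g t := by
    refine Finset.sum_bij (fun r _ => σ r) ?_ ?_ ?_ ?_
    · intro r _
      simp only [Finset.mem_filter, Finset.mem_univ, true_and]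
      exact ((hσ.1 (σ r)).2 ⟨r, rfl⟩)
    · intro r _ r' _ h
      by_contra hne
      rcases lt_or_gt_of_ne hne with hlt | hlt
      · have := hσ.2 r r' hlt; rw [h] at this; simp [dictLt] at this
      · have := hσ.2 r' r hlt; rw [h] at this; simp [dictLt] at this
    · intro t ht
      simp only [Finset.mem_filter, Finset.mem_univ, true_and] at ht
      obtain ⟨r, hr⟩ := (hσ.1 t).1 ht
      exact ⟨r, Finset.mem_univ r, hr⟩
    · intro r _
      simp [structVector, rootMatrix, hg, hα]
  -- step 2 : drop the nonvanishing condition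
  have hΛ2 : ∑ t ∈ Finset.univ.filter
        (fun t : Fin n × Fin n × Fin n => t.1 < t.2.1 ∧ α t.1 t.2.1 t.2.2 ≠ 0), g t
      = ∑ t ∈ Finset.univ.filter
          (fun t : Fin n × Fin n × Fin n => t.1 < t.2.1), g t := by
    refine Finset.sum_subset ?_ ?_
    · intro t ht
      simp only [Finset.mem_filter, Finset.mem_univ, true_and] at ht ⊢
      exact ht.1
    · intro t ht hnt
      simp only [Finset.mem_filter, Finset.mem_univ, true_and] at ht hnt
      have h0 : α t.1 t.2.1 t.2.2 = 0 := by
        by_contra h0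
        exact hnt ⟨ht, h0⟩
      simp [hg, h0]
  -- step 3 : symmetrization
  have hsym : ∀ t : Fin n × Fin n × Fin n, g (t.2.1, t.1, t.2.2) = g t := by
    intro t
    simp only [hg, rootVector]
    rw [hαskew t.1 t.2.1 t.2.2]
    ring
  have hdiag : ∀ t : Fin n × Fin n × Fin n, t.1 = t.2.1 → g t = 0 := by
    intro t h
    simp only [hg]
    rw [h, hαdiag]
    ring
  have hhalf := sum_triple_lt g hsym hdiag
  -- step 4 : compute the full sum
  set c : Fin n → Fin n → Fin n → ℝ := fun j k l => q l / (q j * q k) * α j k l ^ 2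
    with hc
  have hgsplit : ∀ j k l : Fin n, g (j, k, l) =
      ((if i = j then c j k l else 0) + (if i = k then c j k l else 0))
        - (if i = l then c j k l else 0) := by
    intro j k l
    simp only [hg, hc, rootVector]
    split_ifs <;> ring
  have hA : ∑ k, ∑ l, c i k l = S1 / q i := by
    rw [hS1, Finset.sum_div]
    refine Finset.sum_congr rfl fun k _ => ?_
    rw [Finset.sum_div]
    refine Finset.sum_congr rfl fun l _ => ?_
    simp only [hc]; ring
  have hB : ∑ j, ∑ l, c j i l = S1 / q i := by
    rw [hS1, Finset.sum_div]
    refine Finset.sum_congr rfl fun j _ => ?_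
    rw [Finset.sum_div]
    refine Finset.sum_congr rfl fun l _ => ?_
    simp only [hc]
    rw [hαskew i j l]
    ring
  have hC : ∑ j, ∑ k, c j k i = q i * S2 := by
    rw [hS2, Finset.mul_sum]
    refine Finset.sum_congr rfl fun j _ => ?_
    rw [Finset.mul_sum]
    refine Finset.sum_congr rfl fun k _ => ?_
    simp only [hc]; ring
  have hsumg : ∑ t : Fin n × Fin n × Fin n, g t
      = S1 / q i + S1 / q i - q i * S2 := by
    have e1 : ∑ t : Fin n × Fin n × Fin n, g t = ∑ j, ∑ k, ∑ l, g (j, k, l) := by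
      rw [Fintype.sum_prod_type]
      exact Finset.sum_congr rfl fun j _ => Fintype.sum_prod_type _
    rw [e1]
    simp only [hgsplit, Finset.sum_add_distrib, Finset.sum_sub_distrib,
      Finset.sum_ite_irrel, Finset.sum_const_zero, Finset.sum_ite_eq,
      Finset.mem_univ, if_true]
    rw [hA, hB, hC]
  -- finish
  rw [hΛ, hΛ2, hhalf, hsumg]
  unfold ricForm
  rw [hT1, hT2]
  have hqi := hq i
  show _ / q i = _
  field_simp
  ring
end

section
/- Let (𝔫, ⟨·,·⟩) be a nonabelian metric nilpotent Lie algebra with orthogonal Ricci-diagonal basis B, Gram matrix U and structure vector a relative to B, with m = |Λ_B|, and let β ∈ ℝ. Then the endomorphism Ric − β·Id of 𝔫 is a derivation of the Lie algebra 𝔫 if and only if U a = −2β·𝟙_m, where 𝟙_m ∈ ℝ^m is the vector with all entries 1 (i.e., ⟨·,·⟩ is a soliton inner product with nilsoliton constant β if and only if U a = −2β·𝟙_m). -/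
section helpers
variable {n : ℕ} {L : Type} [AddCommGroup L] [Module ℝ L]

lemma Qb_eq (Q : L →ₗ[ℝ] L →ₗ[ℝ] ℝ) (b : Module.Basis (Fin n) ℝ L)
    (hb : ∀ i j, i ≠ j → Q (b i) (b j) = 0) (v : L) (j : Fin n) :
    Q v (b j) = b.repr v j * Q (b j) (b j) := by
  conv_lhs => rw [← b.sum_repr v]
  rw [map_sum, LinearMap.sum_apply]
  rw [Finset.sum_eq_single j]
  · rw [map_smul, LinearMap.smul_apply, smul_eq_mul]
  · intro i _ hij
    rw [map_smul, LinearMap.smul_apply, smul_eq_mul, hb i j hij, mul_zero]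
  · simp

lemma QQ_eq (Q : L →ₗ[ℝ] L →ₗ[ℝ] ℝ) (b : Module.Basis (Fin n) ℝ L)
    (hb : ∀ i j, i ≠ j → Q (b i) (b j) = 0) (v w : L) :
    Q v w = ∑ i, b.repr v i * b.repr w i * Q (b i) (b i) := by
  conv_lhs => rw [← b.sum_repr w]
  rw [map_sum]
  refine Finset.sum_congr rfl fun i _ => ?_
  rw [map_smul, smul_eq_mul, Qb_eq Q b hb v i]
  ring

lemma trace_eq_sum (b : Module.Basis (Fin n) ℝ L) (A : L →ₗ[ℝ] L) :
    LinearMap.trace ℝ L A = ∑ i, b.repr (A (b i)) i := by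
  rw [LinearMap.trace_eq_matrix_trace ℝ b, Matrix.trace]
  simp [LinearMap.toMatrix_apply, Matrix.diag]

end helpers

lemma dictLt_irrefl {n : ℕ} (t : Fin n × Fin n × Fin n) : ¬ dictLt t t := by
  rintro (h | ⟨-, h | ⟨-, h⟩⟩) <;> exact lt_irrefl _ h

lemma enum_injective {n m : ℕ} {σ : Fin m → Fin n × Fin n × Fin n}
    (h : ∀ r r', r < r' → dictLt (σ r) (σ r')) : Function.Injective σ := by
  intro r r' he
  by_contra hne
  rcases lt_or_gt_of_ne hne with hlt | hlt
  · exact dictLt_irrefl (σ r') (he ▸ h r r' hlt)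
  · exact dictLt_irrefl (σ r') (he ▸ h r' r hlt)

lemma sum_enum_eq {n m : ℕ} {σ : Fin m → Fin n × Fin n × Fin n}
    {c : Fin n × Fin n × Fin n → ℝ}
    (hσmem : ∀ t, (t.1 < t.2.1 ∧ c t ≠ 0) ↔ ∃ r, σ r = t)
    (hinj : Function.Injective σ) (g : Fin n × Fin n × Fin n → ℝ) :
    ∑ t ∈ Finset.univ.filter (fun t => t.1 < t.2.1 ∧ c t ≠ 0), g t = ∑ r, g (σ r) := by
  classical
  refine (Finset.sum_bij (fun r _ => σ r) ?_ ?_ ?_ ?_).symm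
  · intro r _
    simp only [Finset.mem_filter, Finset.mem_univ, true_and]
    exact (hσmem (σ r)).mpr ⟨r, rfl⟩
  · intro r _ r' _ hrr; exact hinj hrr
  · intro t ht
    simp only [Finset.mem_filter, Finset.mem_univ, true_and] at ht
    obtain ⟨r, hr⟩ := (hσmem t).mp ht
    exact ⟨r, Finset.mem_univ r, hr⟩
  · intro r _; rfl

lemma sum_swap_filter {n : ℕ} (c F : Fin n × Fin n × Fin n → ℝ)
    (hsymm : ∀ j k l, F (k, j, l) = F (j, k, l))
    (hzero : ∀ t, c t = 0 → F t = 0)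
    (hc0 : ∀ j l, c (j, j, l) = 0) :
    ∑ t : Fin n × Fin n × Fin n, F t
      = 2 * ∑ t ∈ Finset.univ.filter (fun t => t.1 < t.2.1 ∧ c t ≠ 0), F t := by
  classical
  have h1 : ∑ t ∈ Finset.univ.filter (fun t : Fin n × Fin n × Fin n => t.1 < t.2.1), F t
      = ∑ t ∈ Finset.univ.filter (fun t => t.1 < t.2.1 ∧ c t ≠ 0), F t := by
    refine (Finset.sum_subset ?_ ?_).symm
    · intro t ht
      simp only [Finset.mem_filter, Finset.mem_univ, true_and] at ht ⊢
      exact ht.1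
    · intro t ht hnt
      simp only [Finset.mem_filter, Finset.mem_univ, true_and, not_and, not_not] at ht hnt
      exact hzero t (hnt ht)
  have h2 : ∑ t ∈ Finset.univ.filter (fun t : Fin n × Fin n × Fin n => ¬ t.1 < t.2.1), F t
      = ∑ t ∈ Finset.univ.filter (fun t : Fin n × Fin n × Fin n => t.2.1 < t.1), F t := by
    refine (Finset.sum_subset ?_ ?_).symm
    · intro t ht
      simp only [Finset.mem_filter, Finset.mem_univ, true_and] at ht ⊢
      exact not_lt_of_gt ht
    · intro t ht hnt
      simp only [Finset.mem_filter, Finset.mem_univ, true_and, not_lt] at ht hnt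
      have heq : t.1 = t.2.1 := le_antisymm hnt ht
      have hct : c t = 0 := by
        have : c (t.1, t.2.1, t.2.2) = 0 := by rw [← heq]; exact hc0 t.1 t.2.2
        simpa using this
      exact hzero t hct
  have h3 : ∑ t ∈ Finset.univ.filter (fun t : Fin n × Fin n × Fin n => t.2.1 < t.1), F t
      = ∑ t ∈ Finset.univ.filter (fun t : Fin n × Fin n × Fin n => t.1 < t.2.1), F t := by
    refine Finset.sum_bij' (fun t _ => (t.2.1, t.1, t.2.2)) (fun t _ => (t.2.1, t.1, t.2.2))
      ?_ ?_ ?_ ?_ ?_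
    · intro t ht
      simp only [Finset.mem_filter, Finset.mem_univ, true_and] at ht ⊢
      exact ht
    · intro t ht
      simp only [Finset.mem_filter, Finset.mem_univ, true_and] at ht ⊢
      exact ht
    · intro t _; rfl
    · intro t _; rfl
    · intro t _
      rw [← hsymm]
  calc ∑ t : Fin n × Fin n × Fin n, F t
      = ∑ t ∈ Finset.univ.filter (fun t : Fin n × Fin n × Fin n => t.1 < t.2.1), F t
        + ∑ t ∈ Finset.univ.filter (fun t : Fin n × Fin n × Fin n => ¬ t.1 < t.2.1), F t :=
        (Finset.sum_filter_add_sum_filter_not _ _ _).symm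
    _ = 2 * ∑ t ∈ Finset.univ.filter (fun t => t.1 < t.2.1 ∧ c t ≠ 0), F t := by
        rw [h2, h3, h1]; ring

set_option maxHeartbeats 4000000 in
/-- Let `(𝔫, Q)` be a nonabelian metric nilpotent Lie algebra
with orthogonal Ricci-diagonal basis `B`, Gram matrix `U` and structure vector
`a` relative to `B`, `m = |Λ_B|`, and let `β ∈ ℝ`.  Then `Ric - β·Id` is a
derivation of `𝔫` if and only if `U a = -2β·𝟙_m`. -/
theorem stmt1
    {n m : ℕ} {L : Type} [LieRing L] [LieAlgebra ℝ L]
    [LieRing.IsNilpotent L]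
    (Q : L →ₗ[ℝ] L →ₗ[ℝ] ℝ)
    (hQsymm : ∀ x y, Q x y = Q y x)
    (hQpos : ∀ x, x ≠ 0 → 0 < Q x x)
    (hnonab : ∃ x y : L, ⁅x, y⁆ ≠ 0)
    (b : Module.Basis (Fin n) ℝ L)
    (hb : ∀ i j, i ≠ j → Q (b i) (b j) = 0)
    (σ : Fin m → Fin n × Fin n × Fin n)
    (hσ : IsEnumerationOfLambda b σ)
    (adj : (L →ₗ[ℝ] L) → (L →ₗ[ℝ] L))
    (hadj : ∀ (A : L →ₗ[ℝ] L) (x y : L), Q (adj A x) y = Q x (A y))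
    (J : L → L →ₗ[ℝ] L)
    (hJ : ∀ x y z, Q (J x y) z = Q x ⁅y, z⁆)
    -- the basis is Ricci-diagonal
    (hdiag : ∀ i j, i ≠ j → ricForm adj J (b i) (b j) = 0)
    -- the Ricci endomorphism, characterized by `Q (Ric x) y = ric(x, y)`
    (Ric : L →ₗ[ℝ] L)
    (hRic : ∀ x y, Q (Ric x) y = ricForm adj J x y)
    (β : ℝ) :
    (∀ x y : L,
        (Ric - β • LinearMap.id : L →ₗ[ℝ] L) ⁅x, y⁆
          = ⁅(Ric - β • LinearMap.id : L →ₗ[ℝ] L) x, y⁆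
            + ⁅x, (Ric - β • LinearMap.id : L →ₗ[ℝ] L) y⁆)
      ↔ (gramMatrix σ).mulVec (structVector b σ fun i => Q (b i) (b i))
          = fun _ => -2 * β := by
  classical
  haveI : Module.Finite ℝ L := Module.Finite.of_basis b
  haveI : Module.Free ℝ L := Module.Free.of_basis b
  set q : Fin n → ℝ := fun i => Q (b i) (b i) with hq_def
  have hq0 : ∀ i, q i ≠ 0 := fun i => (hQpos (b i) (b.ne_zero i)).ne'
  have hrepr : ∀ (v : L) (j : Fin n), b.repr v j = Q v (b j) / q j := by
    intro v j
    rw [Qb_eq Q b hb v j]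
    field_simp [hq0 j]
    rfl
  have hbr : ∀ j k, ⁅b j, b k⁆ = ∑ l, structConst b j k l • b l :=
    fun j k => (b.sum_repr _).symm
  have hαskew : ∀ j k l, structConst b k j l = - structConst b j k l := by
    intro j k l
    show b.repr ⁅b k, b j⁆ l = - b.repr ⁅b j, b k⁆ l
    rw [← lie_skew (b j) (b k), map_neg]
    simp
  have hαdiag : ∀ j l, structConst b j j l = 0 := by
    intro j l
    have := hαskew j j l
    linarith
  -- the eigenvalues of Ric
  set ρ : Fin n → ℝ := fun i => ricForm adj J (b i) (b i) / q i with hρ_def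
  have hRicb : ∀ i, Ric (b i) = ρ i • b i := by
    intro i
    apply b.ext_elem
    intro j
    rw [hrepr (Ric (b i)) j, hRic, map_smul]
    by_cases h : j = i
    · subst h
      simp [hρ_def]
    · rw [hdiag i j (Ne.symm h)]
      simp [Finsupp.single_apply, Ne.symm h, h]
  have htr : ∀ A : L →ₗ[ℝ] L,
      LinearMap.trace ℝ L (A ∘ₗ adj A) = ∑ j, Q (A (b j)) (A (b j)) / q j := by
    intro A
    rw [LinearMap.trace_comp_comm' (adj A) A, trace_eq_sum b]
    refine Finset.sum_congr rfl fun j _ => ?_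
    rw [LinearMap.comp_apply, hrepr]
    congr 1
    rw [hadj]
  have hadrep : ∀ i j l, b.repr ((LieAlgebra.ad ℝ L (b i)) (b j)) l = structConst b i j l := by
    intro i j l
    rw [LieAlgebra.ad_apply]
    rfl
  have hJrep : ∀ i j k, b.repr (J (b i) (b j)) k = q i * structConst b j k i / q k := by
    intro i j k
    rw [hrepr, hJ, hQsymm, Qb_eq Q b hb]
    show b.repr ⁅b j, b k⁆ i * Q (b i) (b i) / q k = _
    rw [hq_def]
    show b.repr ⁅b j, b k⁆ i * Q (b i) (b i) / Q (b k) (b k)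
      = Q (b i) (b i) * structConst b j k i / Q (b k) (b k)
    rw [structConst]
    ring
  set A : Fin n × Fin n × Fin n → ℝ :=
    fun t => q t.2.2 / (q t.1 * q t.2.1) * (structConst b t.1 t.2.1 t.2.2) ^ 2 with hA_def
  have hAsymm : ∀ j k l, A (k, j, l) = A (j, k, l) := by
    intro j k l
    simp only [hA_def]
    rw [hαskew]
    ring
  have hA0 : ∀ t : Fin n × Fin n × Fin n, structConst b t.1 t.2.1 t.2.2 = 0 → A t = 0 := by
    intro t h
    simp only [hA_def, h]
    ring
  have hric : ∀ i, ricForm adj J (b i) (b i)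
      = q i * (-(1/2) * ∑ j, ∑ l, A (i, j, l) + (1/4) * ∑ j, ∑ k, A (j, k, i)) := by
    intro i
    have t1 : LinearMap.trace ℝ L ((LieAlgebra.ad ℝ L (b i)) ∘ₗ adj (LieAlgebra.ad ℝ L (b i)))
        = ∑ j, ∑ l, (structConst b i j l)^2 * q l / q j := by
      rw [htr]
      refine Finset.sum_congr rfl fun j _ => ?_
      rw [QQ_eq Q b hb, Finset.sum_div]
      refine Finset.sum_congr rfl fun l _ => ?_
      rw [hadrep]
      show structConst b i j l * structConst b i j l * q l / q j = _
      ring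
    have t2 : LinearMap.trace ℝ L ((J (b i)) ∘ₗ adj (J (b i)))
        = ∑ j, ∑ k, (structConst b j k i)^2 * (q i)^2 / (q j * q k) := by
      rw [htr]
      refine Finset.sum_congr rfl fun j _ => ?_
      rw [QQ_eq Q b hb, Finset.sum_div]
      refine Finset.sum_congr rfl fun k _ => ?_
      rw [hJrep]
      show q i * structConst b j k i / q k * (q i * structConst b j k i / q k) * q k / q j = _
      field_simp [hq0 j, hq0 k]
    have u1 : ∑ j, ∑ l, (structConst b i j l)^2 * q l / q j
        = q i * ∑ j, ∑ l, A (i, j, l) := by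
      rw [Finset.mul_sum]
      refine Finset.sum_congr rfl fun j _ => ?_
      rw [Finset.mul_sum]
      refine Finset.sum_congr rfl fun l _ => ?_
      simp only [hA_def]
      field_simp [hq0 i, hq0 j, hq0 l]
    have u2 : ∑ j, ∑ k, (structConst b j k i)^2 * (q i)^2 / (q j * q k)
        = q i * ∑ j, ∑ k, A (j, k, i) := by
      rw [Finset.mul_sum]
      refine Finset.sum_congr rfl fun j _ => ?_
      rw [Finset.mul_sum]
      refine Finset.sum_congr rfl fun k _ => ?_
      simp only [hA_def]
      field_simp [hq0 i, hq0 j, hq0 k]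
    show -(1/2) * LinearMap.trace ℝ L _ + (1/4) * LinearMap.trace ℝ L _ = _
    rw [t1, t2, u1, u2]
    ring
  have hρA : ∀ i, ρ i = -(1/2) * ∑ j, ∑ l, A (i, j, l) + (1/4) * ∑ j, ∑ k, A (j, k, i) := by
    intro i
    show ricForm adj J (b i) (b i) / q i = _
    rw [hric i, mul_comm, mul_div_assoc, div_self (hq0 i), mul_one]
  have key : ∀ i, (∑ r, rootVector (σ r).1 (σ r).2.1 (σ r).2.2 i * structVector b σ q r)
      = -2 * ρ i := by
    intro i
    set F : Fin n × Fin n × Fin n → ℝ :=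
      fun t => rootVector t.1 t.2.1 t.2.2 i * A t with hF_def
    have hFsymm : ∀ j k l, F (k, j, l) = F (j, k, l) := by
      intro j k l
      simp only [hF_def, rootVector, hAsymm]
      ring
    have hF0 : ∀ t : Fin n × Fin n × Fin n, structConst b t.1 t.2.1 t.2.2 = 0 → F t = 0 := by
      intro t h
      simp only [hF_def, hA0 t h, mul_zero]
    have e1 : (∑ r, rootVector (σ r).1 (σ r).2.1 (σ r).2.2 i * structVector b σ q r)
        = ∑ r, F (σ r) := by
      refine Finset.sum_congr rfl fun r _ => ?_
      rfl
    have e2 : ∑ r, F (σ r) = (1/2) * ∑ t : Fin n × Fin n × Fin n, F t := by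
      rw [sum_swap_filter (fun t => structConst b t.1 t.2.1 t.2.2) F hFsymm hF0
        (fun j l => hαdiag j l),
        sum_enum_eq hσ.1 (enum_injective hσ.2) F]
      ring
    have S1 : (∑ t : Fin n × Fin n × Fin n, (if i = t.1 then (1:ℝ) else 0) * A t)
        = ∑ j, ∑ l, A (i, j, l) := by
      rw [Fintype.sum_prod_type]
      rw [Finset.sum_eq_single i]
      · rw [Fintype.sum_prod_type]
        refine Finset.sum_congr rfl fun k _ => Finset.sum_congr rfl fun l _ => ?_
        rw [if_pos rfl, one_mul]
      · intro j _ hj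
        refine Finset.sum_eq_zero fun p _ => ?_
        rw [if_neg (Ne.symm hj), zero_mul]
      · simp
    have S2 : (∑ t : Fin n × Fin n × Fin n, (if i = t.2.1 then (1:ℝ) else 0) * A t)
        = ∑ j, ∑ l, A (i, j, l) := by
      rw [Fintype.sum_prod_type]
      refine Finset.sum_congr rfl fun j _ => ?_
      rw [Fintype.sum_prod_type]
      rw [Finset.sum_eq_single i]
      · refine Finset.sum_congr rfl fun l _ => ?_
        rw [if_pos rfl, one_mul]
        exact (hAsymm j i l).symm
      · intro k _ hk
        refine Finset.sum_eq_zero fun l _ => ?_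
        rw [if_neg (Ne.symm hk), zero_mul]
      · simp
    have S3 : (∑ t : Fin n × Fin n × Fin n, (if i = t.2.2 then (1:ℝ) else 0) * A t)
        = ∑ j, ∑ k, A (j, k, i) := by
      rw [Fintype.sum_prod_type]
      refine Finset.sum_congr rfl fun j _ => ?_
      rw [Fintype.sum_prod_type]
      refine Finset.sum_congr rfl fun k _ => ?_
      rw [Finset.sum_eq_single i]
      · rw [if_pos rfl, one_mul]
      · intro l _ hl
        rw [if_neg (Ne.symm hl), zero_mul]
      · simp
    have e3 : ∑ t : Fin n × Fin n × Fin n, F t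
        = (∑ j, ∑ l, A (i, j, l)) + (∑ j, ∑ l, A (i, j, l)) - (∑ j, ∑ k, A (j, k, i)) := by
      have expand : ∑ t : Fin n × Fin n × Fin n, F t
          = (∑ t : Fin n × Fin n × Fin n, (if i = t.1 then (1:ℝ) else 0) * A t)
            + (∑ t : Fin n × Fin n × Fin n, (if i = t.2.1 then (1:ℝ) else 0) * A t)
            - (∑ t : Fin n × Fin n × Fin n, (if i = t.2.2 then (1:ℝ) else 0) * A t) := by
        rw [← Finset.sum_add_distrib, ← Finset.sum_sub_distrib]
        refine Finset.sum_congr rfl fun t _ => ?_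
        simp only [hF_def, rootVector]
        ring
      rw [expand, S1, S2, S3]
    rw [e1, e2, e3, hρA i]
    ring
  have hDb : ∀ i, (Ric - β • LinearMap.id : L →ₗ[ℝ] L) (b i) = (ρ i - β) • b i := by
    intro i
    rw [LinearMap.sub_apply, LinearMap.smul_apply, LinearMap.id_apply, hRicb i, sub_smul]
  have hDbr : ∀ j k, (Ric - β • LinearMap.id : L →ₗ[ℝ] L) ⁅b j, b k⁆
      = ∑ l, (structConst b j k l * (ρ l - β)) • b l := by
    intro j k
    conv_lhs => rw [hbr j k]
    rw [map_sum]
    refine Finset.sum_congr rfl fun l _ => ?_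
    rw [map_smul, hDb l, smul_smul]
  have hDbr2 : ∀ j k, ⁅(Ric - β • LinearMap.id : L →ₗ[ℝ] L) (b j), b k⁆
        + ⁅b j, (Ric - β • LinearMap.id : L →ₗ[ℝ] L) (b k)⁆
      = ∑ l, ((ρ j + ρ k - 2*β) * structConst b j k l) • b l := by
    intro j k
    rw [hDb j, hDb k, smul_lie, lie_smul, ← add_smul]
    conv_lhs => rw [hbr j k]
    rw [Finset.smul_sum]
    refine Finset.sum_congr rfl fun l _ => ?_
    rw [smul_smul]
    congr 1
    ring
  have hbasis : (∀ x y : L,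
        (Ric - β • LinearMap.id : L →ₗ[ℝ] L) ⁅x, y⁆
          = ⁅(Ric - β • LinearMap.id : L →ₗ[ℝ] L) x, y⁆
            + ⁅x, (Ric - β • LinearMap.id : L →ₗ[ℝ] L) y⁆)
      ↔ ∀ j k l, structConst b j k l ≠ 0 → ρ j + ρ k - ρ l = β := by
    constructor
    · intro h j k l hα
      have h2 := h (b j) (b k)
      rw [hDbr j k, hDbr2 j k] at h2
      have h4 : structConst b j k l * (ρ l - β) = (ρ j + ρ k - 2*β) * structConst b j k l := by
        have hl1 := congrFun (b.repr_sum_self (fun l' => structConst b j k l' * (ρ l' - β))) l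
        have hl2 := congrFun
          (b.repr_sum_self (fun l' => (ρ j + ρ k - 2*β) * structConst b j k l')) l
        rw [← hl1, ← hl2, h2]
      have h5 : structConst b j k l * (ρ l - β)
          = structConst b j k l * (ρ j + ρ k - 2*β) := by rw [h4]; ring
      have h6 := mul_left_cancel₀ hα h5
      linarith
    · intro h x y
      have hbas : ∀ j k, (Ric - β • LinearMap.id : L →ₗ[ℝ] L) ⁅b j, b k⁆
          = ⁅(Ric - β • LinearMap.id : L →ₗ[ℝ] L) (b j), b k⁆
            + ⁅b j, (Ric - β • LinearMap.id : L →ₗ[ℝ] L) (b k)⁆ := by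
        intro j k
        rw [hDbr j k, hDbr2 j k]
        refine Finset.sum_congr rfl fun l _ => ?_
        by_cases hα : structConst b j k l = 0
        · rw [hα]; simp
        · have h5 := h j k l hα
          congr 1
          linear_combination (- structConst b j k l) * h5
      have adsum : ∀ (w : L) (k : Fin n), ⁅w, b k⁆ = ∑ j, b.repr w j • ⁅b j, b k⁆ := by
        intro w k
        have h1 : ⁅b k, w⁆ = ∑ j, b.repr w j • ⁅b k, b j⁆ := by
          conv_lhs => rw [← b.sum_repr w, ← LieAlgebra.ad_apply (R := ℝ) (x := b k)]
          rw [map_sum]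
          refine Finset.sum_congr rfl fun j _ => ?_
          rw [map_smul, LieAlgebra.ad_apply]
        rw [← lie_skew w (b k), h1, ← Finset.sum_neg_distrib]
        refine Finset.sum_congr rfl fun j _ => ?_
        rw [← smul_neg, lie_skew]
      have brsum : ∀ (u v : L), ⁅u, v⁆
          = ∑ j, ∑ k, (b.repr u j * b.repr v k) • ⁅b j, b k⁆ := by
        intro u v
        have h1 : ⁅u, v⁆ = ∑ k, b.repr v k • ⁅u, b k⁆ := by
          conv_lhs => rw [← b.sum_repr v, ← LieAlgebra.ad_apply (R := ℝ) (x := u)]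
          rw [map_sum]
          refine Finset.sum_congr rfl fun k _ => ?_
          rw [map_smul, LieAlgebra.ad_apply]
        rw [h1]
        rw [Finset.sum_comm]
        refine Finset.sum_congr rfl fun k _ => ?_
        rw [adsum u k, Finset.smul_sum]
        refine Finset.sum_congr rfl fun j _ => ?_
        rw [smul_smul, mul_comm]
      have hDrepr : ∀ (x : L) (j : Fin n),
          b.repr ((Ric - β • LinearMap.id : L →ₗ[ℝ] L) x) j = (ρ j - β) * b.repr x j := by
        intro x j
        have hx : (Ric - β • LinearMap.id : L →ₗ[ℝ] L) x
            = ∑ i, ((ρ i - β) * b.repr x i) • b i := by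
          conv_lhs => rw [← b.sum_repr x]
          rw [map_sum]
          refine Finset.sum_congr rfl fun i _ => ?_
          rw [map_smul, hDb i, smul_smul, mul_comm]
        rw [hx]
        exact congrFun (b.repr_sum_self _) j
      calc (Ric - β • LinearMap.id : L →ₗ[ℝ] L) ⁅x, y⁆
          = ∑ j, ∑ k, (b.repr x j * b.repr y k)
              • ((Ric - β • LinearMap.id : L →ₗ[ℝ] L) ⁅b j, b k⁆) := by
            rw [brsum x y, map_sum]
            refine Finset.sum_congr rfl fun j _ => ?_
            rw [map_sum]
            exact Finset.sum_congr rfl fun k _ => map_smul _ _ _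
        _ = ∑ j, ∑ k, ((b.repr x j * b.repr y k)
              • ⁅(Ric - β • LinearMap.id : L →ₗ[ℝ] L) (b j), b k⁆
              + (b.repr x j * b.repr y k)
              • ⁅b j, (Ric - β • LinearMap.id : L →ₗ[ℝ] L) (b k)⁆) := by
            refine Finset.sum_congr rfl fun j _ => Finset.sum_congr rfl fun k _ => ?_
            rw [hbas j k, smul_add]
        _ = ⁅(Ric - β • LinearMap.id : L →ₗ[ℝ] L) x, y⁆
            + ⁅x, (Ric - β • LinearMap.id : L →ₗ[ℝ] L) y⁆ := by
            rw [brsum ((Ric - β • LinearMap.id : L →ₗ[ℝ] L) x) y,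
              brsum x ((Ric - β • LinearMap.id : L →ₗ[ℝ] L) y), ← Finset.sum_add_distrib]
            refine Finset.sum_congr rfl fun j _ => ?_
            rw [← Finset.sum_add_distrib]
            refine Finset.sum_congr rfl fun k _ => ?_
            congr 1
            · rw [hDb j, smul_lie, smul_smul, hDrepr]
              congr 1
              ring
            · rw [hDb k, lie_smul, smul_smul, hDrepr]
              congr 1
              ring
  have hfull_iff : (∀ j k l, structConst b j k l ≠ 0 → ρ j + ρ k - ρ l = β)
      ↔ (∀ r : Fin m, ρ (σ r).1 + ρ (σ r).2.1 - ρ (σ r).2.2 = β) := by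
    constructor
    · intro h r
      have hmem := (hσ.1 (σ r)).mpr ⟨r, rfl⟩
      exact h _ _ _ hmem.2
    · intro h j k l hα
      rcases lt_trichotomy j k with hlt | heq | hgt
      · obtain ⟨r, hr⟩ := (hσ.1 (j, k, l)).mp ⟨hlt, hα⟩
        have h2 := h r
        rw [hr] at h2
        exact h2
      · subst heq
        exact absurd (hαdiag j l) hα
      · have hα' : structConst b k j l ≠ 0 := by
          rw [hαskew]
          simpa using hα
        obtain ⟨r, hr⟩ := (hσ.1 (k, j, l)).mp ⟨hgt, hα'⟩
        have h2 := h r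
        rw [hr] at h2
        dsimp at h2
        linarith
  have hYrho : ∀ (j k l : Fin n), (∑ i, rootVector j k l i * ρ i) = ρ j + ρ k - ρ l := by
    intro j k l
    have hterm : ∀ i : Fin n, rootVector j k l i * ρ i
        = ((if i = j then ρ i else 0) + (if i = k then ρ i else 0))
          - (if i = l then ρ i else 0) := by
      intro i
      rw [rootVector]
      split_ifs <;> ring
    rw [Finset.sum_congr rfl fun i _ => hterm i, Finset.sum_sub_distrib,
      Finset.sum_add_distrib, Finset.sum_ite_eq', Finset.sum_ite_eq', Finset.sum_ite_eq']
    simp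
  have hmv : ∀ r, (gramMatrix σ).mulVec (structVector b σ q) r
      = -2 * (ρ (σ r).1 + ρ (σ r).2.1 - ρ (σ r).2.2) := by
    intro r
    have hstep : (gramMatrix σ).mulVec (structVector b σ q) r
        = ∑ i, rootVector (σ r).1 (σ r).2.1 (σ r).2.2 i
            * ∑ r', rootVector (σ r').1 (σ r').2.1 (σ r').2.2 i * structVector b σ q r' := by
      simp only [gramMatrix, rootMatrix, Matrix.mulVec, dotProduct, Matrix.mul_apply,
        Matrix.transpose_apply, Matrix.of_apply]
      simp_rw [Finset.sum_mul]
      rw [Finset.sum_comm]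
      refine Finset.sum_congr rfl fun i _ => ?_
      rw [Finset.mul_sum]
      refine Finset.sum_congr rfl fun r' _ => ?_
      ring
    rw [hstep]
    calc (∑ i, rootVector (σ r).1 (σ r).2.1 (σ r).2.2 i
            * ∑ r', rootVector (σ r').1 (σ r').2.1 (σ r').2.2 i * structVector b σ q r')
        = ∑ i, rootVector (σ r).1 (σ r).2.1 (σ r).2.2 i * (-2 * ρ i) := by
          refine Finset.sum_congr rfl fun i _ => ?_
          rw [key i]
      _ = -2 * ∑ i, rootVector (σ r).1 (σ r).2.1 (σ r).2.2 i * ρ i := by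
          rw [Finset.mul_sum]
          refine Finset.sum_congr rfl fun i _ => ?_
          ring
      _ = -2 * (ρ (σ r).1 + ρ (σ r).2.1 - ρ (σ r).2.2) := by
          rw [hYrho]
  rw [hbasis, hfull_iff]
  constructor
  · intro h
    funext r
    rw [hmv r, h r]
  · intro h r
    have h2 := congrFun h r
    rw [hmv r] at h2
    have h3 : (-2 : ℝ) ≠ 0 := by norm_num
    exact mul_left_cancel₀ h3 h2
end

section
/- Let (𝔫, ⟨·,·⟩) be a nonabelian metric nilpotent Lie algebra with basis B = {x_1, …, x_n}, structure constants α_{jk}^l, root matrix Y and Gram matrix U relative to B, with m = |Λ_B|. Suppose q : [0,∞) → (0,∞)ⁿ is differentiable and satisfies the Ricci flow equations q_j′(t)/q_j(t) = (a(t)ᵀ Y)_j for j = 1, …, n, where a : [0,∞) → (0,∞)^m is defined by a_r(t) = (q_l(t)/(q_j(t) q_k(t)))(α_{jk}^l)² for the r-th triple (j,k,l) ∈ Λ_B. Then a is differentiable and satisfies the Lie bracket flow equations a_r′(t)/a_r(t) = −(a(t)ᵀ U)_r for all r = 1, …, m and all t ≥ 0. -/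
/-- Let `(𝔫, Q)` be a nonabelian metric nilpotent Lie algebra
with basis `B`, structure constants `α`, root matrix `Y` and Gram matrix `U`.
If `q : [0,∞) → (0,∞)ⁿ` is differentiable and satisfies the Ricci flow
equations `q_j'/q_j = (a(t)ᵀ Y)_j`, where `a(t)` is the structure vector of
`q(t)`, then `a` is differentiable and satisfies the Lie bracket flow
equations `a_r'/a_r = -(a(t)ᵀ U)_r`. -/
theorem stmt2
    {n m : ℕ} {L : Type} [LieRing L] [LieAlgebra ℝ L]
    [LieRing.IsNilpotent L]
    (Q : L →ₗ[ℝ] L →ₗ[ℝ] ℝ)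
    (hQsymm : ∀ x y, Q x y = Q y x)
    (hQpos : ∀ x, x ≠ 0 → 0 < Q x x)
    (hnonab : ∃ x y : L, ⁅x, y⁆ ≠ 0)
    (b : Module.Basis (Fin n) ℝ L)
    (σ : Fin m → Fin n × Fin n × Fin n)
    (hσ : IsEnumerationOfLambda b σ)
    -- the diagonal metric coefficients along the flow
    (q : ℝ → Fin n → ℝ)
    (hqpos : ∀ t ∈ Set.Ici (0:ℝ), ∀ j, 0 < q t j)
    -- the Ricci flow equations `q_j' = q_j (a(t)ᵀ Y)_j`
    (hflow : ∀ t ∈ Set.Ici (0:ℝ), ∀ j : Fin n,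
      HasDerivWithinAt (fun τ => q τ j)
        (q t j * ∑ r : Fin m, structVector b σ (q t) r * rootMatrix σ r j)
        (Set.Ici 0) t) :
    -- the Lie bracket flow equations `a_r' = -a_r (a(t)ᵀ U)_r`
    ∀ t ∈ Set.Ici (0:ℝ), ∀ r : Fin m,
      HasDerivWithinAt (fun τ => structVector b σ (q τ) r)
        (-(structVector b σ (q t) r *
            ∑ r' : Fin m, structVector b σ (q t) r' * gramMatrix σ r' r))
        (Set.Ici 0) t := by
  intro t ht r
  set j := (σ r).1 with hjdef
  set k := (σ r).2.1 with hkdef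
  set l := (σ r).2.2 with hldef
  set c : ℝ := structConst b j k l with hcdef
  set S : Fin n → ℝ := fun i => ∑ r' : Fin m, structVector b σ (q t) r' * rootMatrix σ r' i
    with hSdef
  have hj := hqpos t ht j
  have hk := hqpos t ht k
  have hl := hqpos t ht l
  have hjk : q t j * q t k ≠ 0 := (mul_pos hj hk).ne'
  have Hj := hflow t ht j
  have Hk := hflow t ht k
  have Hl := hflow t ht l
  have hmul : HasDerivWithinAt (fun τ => q τ j * q τ k)
      (q t j * S j * q t k + q t j * (q t k * S k)) (Set.Ici 0) t := Hj.mul Hk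
  have hdiv : HasDerivWithinAt (fun τ => q τ l / (q τ j * q τ k))
      ((q t l * S l * (q t j * q t k) -
        q t l * (q t j * S j * q t k + q t j * (q t k * S k))) / (q t j * q t k) ^ 2)
      (Set.Ici 0) t := Hl.div hmul hjk
  have hfin := hdiv.mul_const (c ^ 2)
  have hfun : (fun τ => structVector b σ (q τ) r) =
      fun τ => q τ l / (q τ j * q τ k) * c ^ 2 := by
    funext τ; rfl
  rw [hfun]
  convert hfin using 1
  case e'_4 => rfl
  case e'_5 => rfl
  -- now prove equality of the derivative values
  have hU : ∀ r' : Fin m, gramMatrix σ r' r =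
      rootMatrix σ r' j + rootMatrix σ r' k - rootMatrix σ r' l := by
    intro r'
    have hrow : ∀ i : Fin n, rootMatrix σ r i =
        (if i = j then (1:ℝ) else 0) + (if i = k then 1 else 0) -
          (if i = l then 1 else 0) := fun i => rfl
    simp only [gramMatrix, Matrix.mul_apply, Matrix.transpose_apply, hrow,
      mul_add, mul_sub, mul_ite, mul_one, mul_zero]
    rw [Finset.sum_sub_distrib, Finset.sum_add_distrib]
    simp [Finset.sum_ite_eq']
  have hsum : ∑ r' : Fin m, structVector b σ (q t) r' * gramMatrix σ r' r
      = S j + S k - S l := by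
    simp only [hU, mul_add, mul_sub]
    rw [Finset.sum_sub_distrib, Finset.sum_add_distrib]
  have ha : structVector b σ (q t) r = q t l / (q t j * q t k) * c ^ 2 := rfl
  rw [hsum, ha]
  field_simp
  ring
end

section
/- Let (𝔫, ⟨·,·⟩) be a nonabelian metric nilpotent Lie algebra with orthogonal Ricci-diagonal basis B, Gram matrix U = (u_{ij}) and m = |Λ_B| ≥ 2. Suppose that every triple (j,k,l) ∈ Λ_B satisfies l ∉ {j,k} (so each root vector has two entries equal to 1 and one entry equal to −1, the diagonal entries of U equal 3, and the off-diagonal entries of U lie in {−2,−1,0,1,2}). Then for each i = 1, …, m−1: (1) the i-th entry of n_i is positive and the m-th entry of n_i is negative; and (2) the point (0,0,…,0,1) ∈ ℝ^m satisfies (0,…,0,1) · n_i < 0, i.e., it lies in the open half-space H_i⁻ = {v : n_i · v < 0}. -/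
/-- The `(m-1) × m` matrix `P` with `P_{ii} = 1`, `P_{im} = -1` and all other
entries `0` (here of size `m × (m+1)`). -/
noncomputable def Pmat (m : ℕ) : Matrix (Fin m) (Fin (m+1)) ℝ :=
  Matrix.of fun i j => if j = i.castSucc then 1 else if j = Fin.last m then -1 else 0


lemma ind_sum {n : ℕ} (a b : Fin n) :
    ∑ i : Fin n, (if i = a then (1:ℝ) else 0) * (if i = b then 1 else 0)
      = if a = b then 1 else 0 := by
  simp only [ite_mul, one_mul, zero_mul]
  rw [Finset.sum_ite_eq' Finset.univ a (fun i => if i = b then (1:ℝ) else 0)]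
  simp

lemma gram_entry {n m : ℕ} (σ : Fin m → Fin n × Fin n × Fin n) (r s : Fin m) :
    gramMatrix σ r s =
      (if (σ r).1 = (σ s).1 then (1:ℝ) else 0)
      + (if (σ r).1 = (σ s).2.1 then 1 else 0)
      - (if (σ r).1 = (σ s).2.2 then 1 else 0)
      + ((if (σ r).2.1 = (σ s).1 then 1 else 0)
      + (if (σ r).2.1 = (σ s).2.1 then 1 else 0)
      - (if (σ r).2.1 = (σ s).2.2 then 1 else 0))
      - ((if (σ r).2.2 = (σ s).1 then 1 else 0)
      + (if (σ r).2.2 = (σ s).2.1 then 1 else 0)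
      - (if (σ r).2.2 = (σ s).2.2 then 1 else 0)) := by
  rw [gramMatrix, Matrix.mul_apply]
  simp only [Matrix.transpose_apply, rootMatrix, Matrix.of_apply, rootVector]
  have expand : ∀ (x y z u v w : ℝ), (x+y-z)*(u+v-w)
      = (x*u + x*v - x*w) + (y*u + y*v - y*w) - (z*u + z*v - z*w) := by intros; ring
  simp only [expand, Finset.sum_add_distrib, Finset.sum_sub_distrib, ind_sum]

set_option maxHeartbeats 1000000 in
lemma key_lt {n : ℕ} {j k l j' k' l' : Fin n}
    (hjk : j < k) (hlj : l ≠ j) (hlk : l ≠ k)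
    (hjk' : j' < k') (hlj' : l' ≠ j') (hlk' : l' ≠ k')
    (hne : (j, k, l) ≠ (j', k', l')) :
    (if j = j' then (1:ℝ) else 0)
      + (if j = k' then 1 else 0)
      - (if j = l' then 1 else 0)
      + ((if k = j' then 1 else 0)
      + (if k = k' then 1 else 0)
      - (if k = l' then 1 else 0))
      - ((if l = j' then 1 else 0)
      + (if l = k' then 1 else 0)
      - (if l = l' then 1 else 0)) < 3 := by
  have h1 : j ≠ k := hjk.ne
  have h2 : j' ≠ k' := hjk'.ne
  have h3 : ¬(j = k' ∧ k = j') := by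
    rintro ⟨e1, e2⟩
    rw [e1, e2] at hjk
    exact absurd hjk' (lt_asymm hjk)
  clear hjk hjk'
  rcases eq_or_ne j j' with hjj | hjj <;>
  rcases eq_or_ne k k' with hkk | hkk <;>
  rcases eq_or_ne j k' with hjk2 | hjk2 <;>
  rcases eq_or_ne k j' with hkj2 | hkj2 <;>
  rcases eq_or_ne l l' with hll | hll <;>
    simp_all <;> split_ifs <;> norm_num

lemma key_eq {n : ℕ} {j k l : Fin n}
    (hjk : j < k) (hlj : l ≠ j) (hlk : l ≠ k) :
    (if j = j then (1:ℝ) else 0)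
      + (if j = k then 1 else 0)
      - (if j = l then 1 else 0)
      + ((if k = j then 1 else 0)
      + (if k = k then 1 else 0)
      - (if k = l then 1 else 0))
      - ((if l = j then 1 else 0)
      + (if l = k then 1 else 0)
      - (if l = l then 1 else 0)) = 3 := by
  have h1 : j ≠ k := hjk.ne
  simp [h1, h1.symm, hlj, hlk, hlj.symm, hlk.symm]
  norm_num

/-- Let `(𝔫, Q)` be a nonabelian metric nilpotent Lie
algebra with orthogonal Ricci-diagonal basis `B`, Gram matrix `U` and
`|Λ_B| = m + 1 ≥ 2`.  Suppose every triple `(j,k,l) ∈ Λ_B` satisfies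
`l ∉ {j,k}`.  Then for each `i`: (1) the `i`-th entry of `n_i = (P U)_i` is
positive and its last entry is negative, and (2) the point `(0,…,0,1)`
satisfies `(0,…,0,1) · n_i < 0`, i.e. lies in the open half-space `H_i⁻`. -/
theorem stmt5
    {n m : ℕ} (hm : 1 ≤ m) {L : Type} [LieRing L] [LieAlgebra ℝ L]
    [LieRing.IsNilpotent L]
    (Q : L →ₗ[ℝ] L →ₗ[ℝ] ℝ)
    (hQsymm : ∀ x y, Q x y = Q y x)
    (hQpos : ∀ x, x ≠ 0 → 0 < Q x x)
    (hnonab : ∃ x y : L, ⁅x, y⁆ ≠ 0)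
    (b : Module.Basis (Fin n) ℝ L)
    (hb : ∀ i j, i ≠ j → Q (b i) (b j) = 0)
    (σ : Fin (m+1) → Fin n × Fin n × Fin n)
    (hσ : IsEnumerationOfLambda b σ)
    (adj : (L →ₗ[ℝ] L) → (L →ₗ[ℝ] L))
    (hadj : ∀ (A : L →ₗ[ℝ] L) (x y : L), Q (adj A x) y = Q x (A y))
    (J : L → L →ₗ[ℝ] L)
    (hJ : ∀ x y z, Q (J x y) z = Q x ⁅y, z⁆)
    (hdiag : ∀ i j, i ≠ j → ricForm adj J (b i) (b j) = 0)
    -- every triple `(j,k,l)` of `Λ_B` satisfies `l ∉ {j, k}`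
    (hl : ∀ r : Fin (m+1), (σ r).2.2 ≠ (σ r).1 ∧ (σ r).2.2 ≠ (σ r).2.1) :
    ∀ i : Fin m,
      0 < (Pmat m * gramMatrix σ) i i.castSucc
      ∧ (Pmat m * gramMatrix σ) i (Fin.last m) < 0
      ∧ ∑ j, (if j = Fin.last m then (1:ℝ) else 0) *
          (Pmat m * gramMatrix σ) i j < 0 := by

  classical
  have horder : ∀ r, (σ r).1 < (σ r).2.1 := fun r => ((hσ.1 (σ r)).mpr ⟨r, rfl⟩).1
  have hinj : Function.Injective σ := by
    intro r s hrs
    by_contra hne'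
    rcases lt_or_gt_of_ne hne' with h | h
    · have hd := hσ.2 r s h
      rw [hrs] at hd
      rcases hd with h' | ⟨_, h' | ⟨_, h'⟩⟩ <;> exact absurd h' (lt_irrefl _)
    · have hd := hσ.2 s r h
      rw [hrs] at hd
      rcases hd with h' | ⟨_, h' | ⟨_, h'⟩⟩ <;> exact absurd h' (lt_irrefl _)
  have hGdiag : ∀ r, gramMatrix σ r r = 3 := by
    intro r
    rw [gram_entry]
    exact key_eq (horder r) (hl r).1 (hl r).2
  have hGoff : ∀ r s, r ≠ s → gramMatrix σ r s < 3 := by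
    intro r s hrs
    rw [gram_entry]
    exact key_lt (horder r) (hl r).1 (hl r).2 (horder s) (hl s).1 (hl s).2
      (fun h => hrs (hinj h))
  have hPU : ∀ (i : Fin m) (j : Fin (m+1)), (Pmat m * gramMatrix σ) i j
      = gramMatrix σ i.castSucc j - gramMatrix σ (Fin.last m) j := by
    intro i j
    rw [Matrix.mul_apply]
    have hne : (i.castSucc : Fin (m+1)) ≠ Fin.last m := (Fin.castSucc_lt_last i).ne
    have hterm : ∀ r : Fin (m+1), Pmat m i r * gramMatrix σ r j =
        (if r = i.castSucc then gramMatrix σ r j else 0)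
          - (if r = Fin.last m then gramMatrix σ r j else 0) := by
      intro r
      simp only [Pmat, Matrix.of_apply]
      split_ifs with ha hb <;> simp_all [(Fin.castSucc_lt_last i).ne']
    rw [Finset.sum_congr rfl (fun r _ => hterm r), Finset.sum_sub_distrib,
      Finset.sum_ite_eq' Finset.univ, Finset.sum_ite_eq' Finset.univ]
    simp
  intro i
  have hlt1 : gramMatrix σ (Fin.last m) i.castSucc < 3 :=
    hGoff _ _ (Fin.castSucc_lt_last i).ne'
  have hlt2 : gramMatrix σ i.castSucc (Fin.last m) < 3 :=
    hGoff _ _ (Fin.castSucc_lt_last i).ne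
  refine ⟨?_, ?_, ?_⟩
  · rw [hPU, hGdiag]; linarith
  · rw [hPU, hGdiag]; linarith
  · have : ∑ j, (if j = Fin.last m then (1:ℝ) else 0) * (Pmat m * gramMatrix σ) i j
        = (Pmat m * gramMatrix σ) i (Fin.last m) := by
      simp only [ite_mul, one_mul, zero_mul]
      rw [Finset.sum_ite_eq' Finset.univ]
      simp
    rw [this, hPU, hGdiag]; linarith
end

section
/- Consider the system s_i′ = −s_i η_i(s), i = 1, …, m−1, where η_i(s) = n_i · (s_1, …, s_{m−1}, 1) and n_i is the i-th row minus the m-th row of the Gram matrix U of a nonabelian metric nilpotent Lie algebra relative to an orthogonal Ricci-diagonal basis. Let b ≥ 0 be an equilibrium point such that for some index i, b_i = 0 and η_i(b) < 0. Then b repels nearby points of the open positive orthant: there exists ε > 0 such that every solution s(t) taking values in (0,∞)^{m−1} with ‖s(0) − b‖ < ε leaves the set {s > 0 : ‖s − b‖ < ε} in finite time. -/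
/-- `η_i(s) = n_i · (s_1, …, s_{m-1}, 1)`, where `n_i` is the `i`-th row of
the matrix `U` minus its last row. -/
noncomputable def etaFun {m : ℕ} (U : Matrix (Fin (m+1)) (Fin (m+1)) ℝ)
    (i : Fin m) (s : Fin m → ℝ) : ℝ :=
  ∑ j, (U i.castSucc j - U (Fin.last m) j) * (Fin.snoc s (1:ℝ) : Fin (m+1) → ℝ) j


private lemma eta_cont' {m : ℕ} (U : Matrix (Fin (m+1)) (Fin (m+1)) ℝ) (i : Fin m) :
    Continuous (fun s : Fin m → ℝ => etaFun U i s) := by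
  unfold etaFun
  apply continuous_finset_sum
  intro j _
  apply Continuous.mul continuous_const
  induction j using Fin.lastCases with
  | last => simpa using continuous_const
  | cast k => simp only [Fin.snoc_castSucc]; exact continuous_apply k

/-- For the system `s_i' = -s_i η_i(s)` associated with the
Gram matrix of a nonabelian metric nilpotent Lie algebra relative to an
orthogonal Ricci-diagonal basis, an equilibrium point `v ≥ 0` with `v i₀ = 0`
and `η_{i₀}(v) < 0` for some `i₀` repels nearby points of the open positive
orthant: there is `ε > 0` such that every solution with values in the open
positive orthant starting within distance `ε` of `v` leaves the
`ε`-neighborhood of `v` in finite time. -/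
theorem stmt9
    {n m : ℕ} {L : Type} [LieRing L] [LieAlgebra ℝ L]
    [LieRing.IsNilpotent L]
    (Q : L →ₗ[ℝ] L →ₗ[ℝ] ℝ)
    (hQsymm : ∀ x y, Q x y = Q y x)
    (hQpos : ∀ x, x ≠ 0 → 0 < Q x x)
    (hnonab : ∃ x y : L, ⁅x, y⁆ ≠ 0)
    (b : Module.Basis (Fin n) ℝ L)
    (hb : ∀ i j, i ≠ j → Q (b i) (b j) = 0)
    (σ : Fin (m+1) → Fin n × Fin n × Fin n)
    (hσ : IsEnumerationOfLambda b σ)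
    (adj : (L →ₗ[ℝ] L) → (L →ₗ[ℝ] L))
    (hadj : ∀ (A : L →ₗ[ℝ] L) (x y : L), Q (adj A x) y = Q x (A y))
    (J : L → L →ₗ[ℝ] L)
    (hJ : ∀ x y z, Q (J x y) z = Q x ⁅y, z⁆)
    (hdiag : ∀ i j, i ≠ j → ricForm adj J (b i) (b j) = 0)
    -- an equilibrium point `v` in the closed positive orthant
    (v : Fin m → ℝ)
    (hv0 : ∀ i, 0 ≤ v i)
    (hveq : ∀ i : Fin m, v i * etaFun (gramMatrix σ) i v = 0)
    (i₀ : Fin m)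
    (hvi₀ : v i₀ = 0)
    (hneg : etaFun (gramMatrix σ) i₀ v < 0) :
    ∃ ε > (0:ℝ), ∀ s : ℝ → Fin m → ℝ,
      (∀ t ∈ Set.Ici (0:ℝ), ∀ i : Fin m,
        HasDerivWithinAt (fun τ => s τ i)
          (-(s t i * etaFun (gramMatrix σ) i (s t))) (Set.Ici 0) t) →
      (∀ t ∈ Set.Ici (0:ℝ), ∀ i, 0 < s t i) →
      ‖s 0 - v‖ < ε →
      ∃ t ∈ Set.Ici (0:ℝ), ε ≤ ‖s t - v‖ := by
  
  classical
  set U := gramMatrix σ with hU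
  set c : ℝ := -etaFun U i₀ v / 2 with hc
  have hcpos : 0 < c := by rw [hc]; linarith
  have hcont := eta_cont' U i₀
  have hopen : IsOpen {w : Fin m → ℝ | etaFun U i₀ w < -c} :=
    isOpen_lt hcont continuous_const
  have hvmem : v ∈ {w : Fin m → ℝ | etaFun U i₀ w < -c} := by
    simp only [Set.mem_setOf_eq]; rw [hc]; linarith
  obtain ⟨ε, hε, hball⟩ := Metric.isOpen_iff.mp hopen v hvmem
  refine ⟨ε, hε, ?_⟩
  intro s hderiv hpos h0
  by_contra hcon
  push_neg at hcon
  have hin : ∀ t ∈ Set.Ici (0:ℝ), etaFun U i₀ (s t) < -c := by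
    intro t ht
    exact hball (show s t ∈ Metric.ball v ε by
      rw [Metric.mem_ball, dist_eq_norm]; exact hcon t ht)
  set g : ℝ → ℝ := fun t => s t i₀ with hgdef
  have hg : ∀ t ∈ Set.Ici (0:ℝ),
      HasDerivWithinAt g (-(g t * etaFun U i₀ (s t))) (Set.Ici 0) t :=
    fun t ht => hderiv t ht i₀
  have hgpos : ∀ t ∈ Set.Ici (0:ℝ), 0 < g t := fun t ht => hpos t ht i₀
  have hcontg : ContinuousOn g (Set.Ici 0) := fun t ht => (hg t ht).continuousWithinAt
  have hderivAt : ∀ t ∈ interior (Set.Ici (0:ℝ)),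
      HasDerivAt g (-(g t * etaFun U i₀ (s t))) t := by
    intro t ht
    rw [interior_Ici] at ht
    exact (hg t (Set.mem_Ici.mpr (le_of_lt ht))).hasDerivAt (Ici_mem_nhds ht)
  have hdiff : DifferentiableOn ℝ g (interior (Set.Ici (0:ℝ))) :=
    fun t ht => (hderivAt t ht).differentiableAt.differentiableWithinAt
  have hderiv_eq : ∀ t ∈ interior (Set.Ici (0:ℝ)),
      deriv g t = -(g t * etaFun U i₀ (s t)) := fun t ht => (hderivAt t ht).deriv
  have hmono : ∀ t ∈ Set.Ici (0:ℝ), g 0 ≤ g t := by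
    intro t ht
    have h := (convex_Ici (0:ℝ)).mul_sub_le_image_sub_of_le_deriv hcontg hdiff
      (C := 0) ?_ 0 Set.self_mem_Ici t ht ht
    · linarith
    · intro x hx
      rw [hderiv_eq x hx]
      rw [interior_Ici] at hx
      have h1 := hgpos x (Set.mem_Ici.mpr (le_of_lt hx))
      have h2 := hin x (Set.mem_Ici.mpr (le_of_lt hx))
      nlinarith
  set a : ℝ := g 0 with ha
  have hapos : 0 < a := hgpos 0 Set.self_mem_Ici
  have hgrow : ∀ t ∈ Set.Ici (0:ℝ), a + c * a * t ≤ g t := by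
    intro t ht
    have h := (convex_Ici (0:ℝ)).mul_sub_le_image_sub_of_le_deriv hcontg hdiff
      (C := c * a) ?_ 0 Set.self_mem_Ici t ht ht
    · linarith
    · intro x hx
      rw [hderiv_eq x hx]
      have hx' : (0:ℝ) ≤ x := by rw [interior_Ici] at hx; exact le_of_lt hx
      have h1 := hmono x hx'
      have h2 := hin x hx'
      have h3 := hgpos x hx'
      nlinarith
  have hbound : ∀ t ∈ Set.Ici (0:ℝ), g t < ε := by
    intro t ht
    have h1 : ‖(s t - v) i₀‖ ≤ ‖s t - v‖ := norm_le_pi_norm (s t - v) i₀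
    have h2 : (s t - v) i₀ = g t := by simp [hgdef, hvi₀]
    have h3 := hcon t ht
    rw [h2] at h1
    calc g t ≤ ‖g t‖ := le_abs_self _
    _ ≤ ‖s t - v‖ := h1
    _ < ε := h3
  have htmem : (ε / (c * a)) ∈ Set.Ici (0:ℝ) :=
    le_of_lt (div_pos hε (mul_pos hcpos hapos))
  have h1 := hgrow _ htmem
  have h2 := hbound _ htmem
  have h3 : c * a * (ε / (c * a)) = ε := by
    field_simp
  rw [h3] at h1
  linarith
end

section
/- Let (𝔫, ⟨·,·⟩) be a metric nilpotent Lie algebra and suppose there exist β ∈ ℝ and a derivation D of 𝔫 with D = Ric − β·Id, where D is symmetric with n distinct positive eigenvalues λ_1 < λ_2 < … < λ_n (so all eigenspaces are one-dimensional), and let B = {x_1, …, x_n} be a corresponding orthogonal eigenbasis with D x_i = λ_i x_i. Then for all i < j, the bracket [x_i, x_j] lies in the eigenspace of D for the eigenvalue λ_i + λ_j and hence is a scalar multiple of some x_k with k > j; moreover B is stably Ricci-diagonal: for every c = (c_1, …, c_n) ∈ (0,∞)ⁿ, the Ricci form ric_c of 𝔫 with respect to the rescaled inner product Q_c determined by Q_c(x_i,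 x_j) = c_i δ_{ij}⟨x_i, x_i⟩ satisfies ric_c(x_i, x_j) = 0 for all i ≠ j. -/
lemma trace_comp_eq_zero_aux {n : ℕ} {L : Type} [AddCommGroup L] [Module ℝ L]
    (b : Module.Basis (Fin n) ℝ L) (A B : L →ₗ[ℝ] L)
    (h : ∀ k l : Fin n, b.repr (B (b k)) l * b.repr (A (b l)) k = 0) :
    LinearMap.trace ℝ L (A ∘ₗ B) = 0 := by
  rw [LinearMap.trace_eq_matrix_trace ℝ b, Matrix.trace]
  apply Finset.sum_eq_zero
  intro k _
  rw [Matrix.diag_apply, LinearMap.toMatrix_apply, LinearMap.comp_apply]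
  conv_lhs => rw [← b.sum_repr (B (b k))]
  rw [map_sum, map_sum, Finsupp.finset_sum_apply]
  apply Finset.sum_eq_zero
  intro l _
  simpa using h k l


/-- The basis `b`, orthogonal for the inner product `Q`, is *stably
Ricci-diagonal*: for every rescaling of the basis vectors by positive
constants `c`, the Ricci form of the rescaled inner product `Q_c`
(determined by `Q_c(b i, b j) = c i * δ_{ij} * Q(b i, b i)`) vanishes on
distinct basis vectors.  The Ricci form of `Q_c` is expressed through the
`Q_c`-adjoint operation `adjc` and the map `Jc` characterized by
`Q_c (Jc x y) z = Q_c x ⁅y, z⁆`. -/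
def StablyRicciDiagonal {n : ℕ} {L : Type} [LieRing L] [LieAlgebra ℝ L]
    (Q : L →ₗ[ℝ] L →ₗ[ℝ] ℝ) (b : Module.Basis (Fin n) ℝ L) : Prop :=
  ∀ (c : Fin n → ℝ), (∀ i, 0 < c i) →
  ∀ (Qc : L →ₗ[ℝ] L →ₗ[ℝ] ℝ),
    (∀ i j, Qc (b i) (b j) = if i = j then c i * Q (b i) (b i) else 0) →
  ∀ (adjc : (L →ₗ[ℝ] L) → (L →ₗ[ℝ] L)),
    (∀ (A : L →ₗ[ℝ] L) (x y : L), Qc (adjc A x) y = Qc x (A y)) →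
  ∀ (Jc : L → L →ₗ[ℝ] L),
    (∀ x y z, Qc (Jc x y) z = Qc x ⁅y, z⁆) →
  ∀ i j, i ≠ j → ricForm adjc Jc (b i) (b j) = 0

/-- Let `(𝔫, Q)` be a metric nilpotent Lie algebra and
suppose `D = Ric - β·Id` is a symmetric derivation with `n` distinct positive
eigenvalues `λ_1 < ⋯ < λ_n` and orthogonal eigenbasis `B = {x_1, …, x_n}`.
Then for `i < j` the bracket `⁅x_i, x_j⁆` lies in the eigenspace of `D` for
the eigenvalue `λ_i + λ_j`, hence is a scalar multiple of some `x_k` with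
`k > j`; moreover `B` is stably Ricci-diagonal. -/
theorem stmt10
    {n : ℕ} {L : Type} [LieRing L] [LieAlgebra ℝ L]
    [LieRing.IsNilpotent L]
    (Q : L →ₗ[ℝ] L →ₗ[ℝ] ℝ)
    (hQsymm : ∀ x y, Q x y = Q y x)
    (hQpos : ∀ x, x ≠ 0 → 0 < Q x x)
    -- an orthogonal basis
    (b : Module.Basis (Fin n) ℝ L)
    (hb : ∀ i j, i ≠ j → Q (b i) (b j) = 0)
    (adj : (L →ₗ[ℝ] L) → (L →ₗ[ℝ] L))
    (hadj : ∀ (A : L →ₗ[ℝ] L) (x y : L), Q (adj A x) y = Q x (A y))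
    (J : L → L →ₗ[ℝ] L)
    (hJ : ∀ x y z, Q (J x y) z = Q x ⁅y, z⁆)
    -- the Ricci endomorphism
    (Ric : L →ₗ[ℝ] L)
    (hRic : ∀ x y, Q (Ric x) y = ricForm adj J x y)
    -- `D = Ric - β Id` is a symmetric derivation with eigenbasis `b` and
    -- distinct positive eigenvalues
    (β : ℝ) (D : L →ₗ[ℝ] L)
    (hD : D = Ric - β • LinearMap.id)
    (hDder : ∀ x y : L, D ⁅x, y⁆ = ⁅D x, y⁆ + ⁅x, D y⁆)
    (hDsymm : ∀ x y, Q (D x) y = Q x (D y))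
    (lam : Fin n → ℝ)
    (hmono : StrictMono lam)
    (hlampos : ∀ i, 0 < lam i)
    (heig : ∀ i, D (b i) = lam i • b i) :
    (∀ i j : Fin n, i < j →
        D ⁅b i, b j⁆ = (lam i + lam j) • ⁅b i, b j⁆
        ∧ (⁅b i, b j⁆ = 0 ∨ ∃ k : Fin n, j < k ∧ ∃ t : ℝ, ⁅b i, b j⁆ = t • b k))
    ∧ StablyRicciDiagonal Q b := by
  -- D in coordinates
  have hDcoord : ∀ (v : L) (k : Fin n), b.repr (D v) k = lam k * b.repr v k := by
    intro v k
    conv_lhs => rw [← b.sum_repr v]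
    rw [map_sum, map_sum, Finsupp.finset_sum_apply]
    conv_rhs => rw [← b.sum_repr v]
    rw [map_sum, Finsupp.finset_sum_apply, Finset.mul_sum]
    apply Finset.sum_congr rfl
    intro m _
    simp only [heig, map_smul, Finsupp.smul_apply, smul_eq_mul, Module.Basis.repr_self,
      Finsupp.single_apply]
    split <;> rename_i h <;> simp [h, mul_comm]
  have hbr : ∀ p q : Fin n, D ⁅b p, b q⁆ = (lam p + lam q) • ⁅b p, b q⁆ := by
    intro p q
    rw [hDder, heig, heig, smul_lie, lie_smul, add_smul]
  have hstruct : ∀ p q k : Fin n, b.repr ⁅b p, b q⁆ k ≠ 0 → lam p + lam q = lam k := by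
    intro p q k hne
    have h1 := congrArg (fun v => b.repr v k) (hbr p q)
    simp only [hDcoord, map_smul, Finsupp.smul_apply, smul_eq_mul] at h1
    exact (mul_right_cancel₀ hne h1).symm
  constructor
  · intro i j hij
    refine ⟨hbr i j, ?_⟩
    by_cases hz : ⁅b i, b j⁆ = 0
    · exact Or.inl hz
    · right
      have hrz : b.repr ⁅b i, b j⁆ ≠ 0 := fun h => hz (by
        have := congrArg b.repr.symm h
        simpa using this)
      obtain ⟨k, hk⟩ := Finsupp.ne_iff.mp hrz
      have hlk : lam i + lam j = lam k := hstruct i j k (by simpa using hk)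
      refine ⟨k, ?_, b.repr ⁅b i, b j⁆ k, ?_⟩
      · exact hmono.lt_iff_lt.mp (by nlinarith [hlampos i])
      · have hothers : ∀ m : Fin n, m ≠ k → b.repr ⁅b i, b j⁆ m = 0 := by
          intro m hm
          by_contra hmne
          exact hm (hmono.injective ((hstruct i j m hmne).symm.trans hlk))
        conv_lhs => rw [← b.sum_repr ⁅b i, b j⁆]
        rw [Finset.sum_eq_single k]
        · intro m _ hm
          rw [hothers m hm, zero_smul]
        · intro h; exact absurd (Finset.mem_univ k) h
  · intro c hc Qc hQc adjc hadjc Jc hJc i j hij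
    set d : Fin n → ℝ := fun p => c p * Q (b p) (b p) with hd
    have hdpos : ∀ p, d p ≠ 0 := fun p =>
      ne_of_gt (mul_pos (hc p) (hQpos (b p) (b.ne_zero p)))
    -- Qc in coordinates
    have hQc1 : ∀ (v : L) (q : Fin n), Qc v (b q) = b.repr v q * d q := by
      intro v q
      conv_lhs => rw [← b.sum_repr v]
      rw [map_sum, LinearMap.sum_apply]
      rw [Finset.sum_eq_single q]
      · simp [hQc, mul_comm, hd]
      · intro m _ hm
        simp [hQc, hm]
      · intro h; exact absurd (Finset.mem_univ q) h
    have hQc2 : ∀ (p : Fin n) (v : L), Qc (b p) v = d p * b.repr v p := by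
      intro p v
      conv_lhs => rw [← b.sum_repr v]
      rw [map_sum]
      rw [Finset.sum_eq_single p]
      · simp [hQc, mul_comm, hd]
      · intro m _ hm
        simp [hQc, Ne.symm hm]
      · intro h; exact absurd (Finset.mem_univ p) h
    unfold ricForm
    have hne : lam i ≠ lam j := fun h => hij (hmono.injective h)
    have t1 : LinearMap.trace ℝ L
        ((LieAlgebra.ad ℝ L (b i)) ∘ₗ adjc (LieAlgebra.ad ℝ L (b j))) = 0 := by
      apply trace_comp_eq_zero_aux b
      intro k l
      by_contra hprod
      obtain ⟨hB, hA⟩ := mul_ne_zero_iff.mp hprod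
      -- from hB : repr (adjc (ad b j) (b k)) l ≠ 0 deduce lam j + lam l = lam k
      have e1 : b.repr (adjc (LieAlgebra.ad ℝ L (b j)) (b k)) l * d l
          = d k * b.repr ⁅b j, b l⁆ k := by
        rw [← hQc1, hadjc, LieAlgebra.ad_apply, hQc2]
      have hBr : b.repr ⁅b j, b l⁆ k ≠ 0 := by
        intro h0
        rw [h0, mul_zero] at e1
        exact hB (by
          have := mul_eq_zero.mp e1
          tauto)
      have h1 : lam j + lam l = lam k := hstruct j l k hBr
      have hAr : b.repr ⁅b i, b l⁆ k ≠ 0 := by simpa [LieAlgebra.ad_apply] using hA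
      have h2 : lam i + lam l = lam k := hstruct i l k hAr
      exact hne (by linarith)
    have t2 : LinearMap.trace ℝ L ((Jc (b i)) ∘ₗ adjc (Jc (b j))) = 0 := by
      apply trace_comp_eq_zero_aux b
      intro k l
      by_contra hprod
      obtain ⟨hB, hA⟩ := mul_ne_zero_iff.mp hprod
      have hJcoord : ∀ (p l k : Fin n), b.repr (Jc (b p) (b l)) k ≠ 0 →
          lam l + lam k = lam p := by
        intro p l' k' hne'
        have e : b.repr (Jc (b p) (b l')) k' * d k' = d p * b.repr ⁅b l', b k'⁆ p := by
          rw [← hQc1, hJc, hQc2]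
        have : b.repr ⁅b l', b k'⁆ p ≠ 0 := by
          intro h0
          rw [h0, mul_zero] at e
          exact hne' (by
            have := mul_eq_zero.mp e
            tauto)
        exact hstruct l' k' p this
      -- hB : repr (adjc (Jc (b j)) (b k)) l ≠ 0
      have e1 : b.repr (adjc (Jc (b j)) (b k)) l * d l
          = d k * b.repr (Jc (b j) (b l)) k := by
        rw [← hQc1, hadjc, hQc2]
      have hBr : b.repr (Jc (b j) (b l)) k ≠ 0 := by
        intro h0
        rw [h0, mul_zero] at e1
        exact hB (by
          have := mul_eq_zero.mp e1
          tauto)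
      have h1 : lam l + lam k = lam j := hJcoord j l k hBr
      have h2 : lam l + lam k = lam i := hJcoord i l k hA
      exact hne (by linarith)
    rw [t1, t2]
    ring
end

section
/- Let U be the m × m Gram matrix of a nonabelian metric nilpotent Lie algebra relative to a stably Ricci-diagonal basis, let β < 0 and let a_0 ∈ (0,∞)^m satisfy U a_0 = −2β·𝟙_m. If a : [0,∞) → ℝ^m is differentiable with a(0) = a_0 and satisfies the Lie bracket flow a_r′(t) = −a_r(t)(U a(t))_r for all r, then a(t) = (−2βt + 1)^{−1} a_0 for all t ≥ 0; in particular the ray ℝ⁺ a_0 is invariant under the flow, and each component satisfies the differential equation a_r′(t) = (2β/a_r(0)) a_r(t)². -/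
/-- Let `U` be the Gram matrix of a nonabelian metric
nilpotent Lie algebra relative to a stably Ricci-diagonal basis, let `β < 0`
and let `a₀ ∈ (0,∞)^m` satisfy `U a₀ = -2β 𝟙`.  If `a` is differentiable
with `a 0 = a₀` and satisfies the Lie bracket flow `a_r' = -a_r (U a)_r`,
then `a t = (-2βt + 1)⁻¹ a₀` for all `t ≥ 0`; in particular the ray `ℝ⁺ a₀`
is invariant, and each component satisfies `a_r' = (2β/a_r(0)) a_r²`. -/
theorem stmt11
    {n m : ℕ} {L : Type} [LieRing L] [LieAlgebra ℝ L]
    [LieRing.IsNilpotent L]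
    (Q : L →ₗ[ℝ] L →ₗ[ℝ] ℝ)
    (hQsymm : ∀ x y, Q x y = Q y x)
    (hQpos : ∀ x, x ≠ 0 → 0 < Q x x)
    (hnonab : ∃ x y : L, ⁅x, y⁆ ≠ 0)
    (b : Module.Basis (Fin n) ℝ L)
    (hb : ∀ i j, i ≠ j → Q (b i) (b j) = 0)
    (hstable : StablyRicciDiagonal Q b)
    (σ : Fin m → Fin n × Fin n × Fin n)
    (hσ : IsEnumerationOfLambda b σ)
    (β : ℝ) (hβ : β < 0)
    (a₀ : Fin m → ℝ)
    (ha₀pos : ∀ r, 0 < a₀ r)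
    (ha₀ : (gramMatrix σ).mulVec a₀ = fun _ => -2 * β)
    (a : ℝ → Fin m → ℝ)
    (ha0 : a 0 = a₀)
    (hflow : ∀ t ∈ Set.Ici (0:ℝ), ∀ r : Fin m,
      HasDerivWithinAt (fun τ => a τ r)
        (-(a t r * ∑ r' : Fin m, gramMatrix σ r r' * a t r'))
        (Set.Ici 0) t) :
    (∀ t ∈ Set.Ici (0:ℝ), ∀ r, a t r = (-2 * β * t + 1)⁻¹ * a₀ r)
    ∧ (∀ t ∈ Set.Ici (0:ℝ), ∃ c : ℝ, 0 < c ∧ a t = c • a₀)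
    ∧ (∀ t ∈ Set.Ici (0:ℝ), ∀ r : Fin m,
        HasDerivWithinAt (fun τ => a τ r)
          ((2 * β / a₀ r) * (a t r) ^ 2) (Set.Ici 0) t) := by
  classical
  set U : Matrix (Fin m) (Fin m) ℝ := gramMatrix σ with hUdef
  set v : (Fin m → ℝ) → Fin m → ℝ :=
    fun x r => -(x r * ∑ r' : Fin m, U r r' * x r') with hvdef
  have hc1 : ∀ t : ℝ, 0 ≤ t → 1 ≤ -2 * β * t + 1 := by
    intro t ht
    have : 0 ≤ -2 * β * t := mul_nonneg (by linarith) ht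
    linarith
  have hcne : ∀ t : ℝ, 0 ≤ t → -2 * β * t + 1 ≠ 0 := by
    intro t ht; have := hc1 t ht; linarith
  set g : ℝ → Fin m → ℝ := fun t r => (-2 * β * t + 1)⁻¹ * a₀ r with hgdef
  have hUa₀ : ∀ r, ∑ r' : Fin m, U r r' * a₀ r' = -2 * β := by
    intro r
    have := congrFun ha₀ r
    simpa [Matrix.mulVec, dotProduct, hUdef] using this
  -- g solves the same ODE
  have hgderiv : ∀ t : ℝ, 0 ≤ t → ∀ r : Fin m,
      HasDerivAt (fun τ => g τ r) (v (g t) r) t := by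
    intro t ht r
    have h1 : HasDerivAt (fun τ : ℝ => -2 * β * τ + 1) (-2 * β) t := by
      simpa using ((hasDerivAt_id t).const_mul (-2 * β)).add_const 1
    have h2 : HasDerivAt (fun τ => (-2 * β * τ + 1)⁻¹ * a₀ r)
        (-(-2 * β) / (-2 * β * t + 1) ^ 2 * a₀ r) t :=
      (h1.inv (hcne t ht)).mul_const _
    have hc0 := hcne t ht
    convert h2 using 1
    simp only [hvdef, hgdef]
    have hsum : ∑ r' : Fin m, U r r' * ((-2 * β * t + 1)⁻¹ * a₀ r')
        = (-2 * β * t + 1)⁻¹ * ∑ r' : Fin m, U r r' * a₀ r' := by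
      rw [Finset.mul_sum]; exact Finset.sum_congr rfl fun r' _ => by ring
    rw [hsum, hUa₀ r]
    field_simp
  -- uniqueness on [0, T] for each T
  have key : ∀ T : ℝ, 0 ≤ T → a T = g T := by
    intro T hT
    have hacont : ContinuousOn a (Set.Icc 0 T) := by
      intro t ht
      have : ContinuousWithinAt a (Set.Ici 0) t :=
        continuousWithinAt_pi.2 fun r => (hflow t ht.1 r).continuousWithinAt
      exact this.mono (fun x hx => hx.1)
    obtain ⟨R₁, hR₁⟩ := isCompact_Icc.exists_bound_of_continuousOn hacont
    set R : ℝ := max R₁ ‖a₀‖ with hRdef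
    have hR0 : 0 ≤ R := le_trans (norm_nonneg a₀) (le_max_right _ _)
    set C : ℝ := ∑ r : Fin m, ∑ r' : Fin m, |U r r'| with hCdef
    have hC0 : 0 ≤ C := Finset.sum_nonneg fun r _ =>
      Finset.sum_nonneg fun r' _ => abs_nonneg _
    have hSb : ∀ (z : Fin m → ℝ) (r : Fin m),
        |∑ r' : Fin m, U r r' * z r'| ≤ C * ‖z‖ := by
      intro z r
      calc |∑ r' : Fin m, U r r' * z r'| ≤ ∑ r' : Fin m, |U r r' * z r'| :=
            Finset.abs_sum_le_sum_abs _ _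
        _ ≤ ∑ r' : Fin m, |U r r'| * ‖z‖ := by
            refine Finset.sum_le_sum fun r' _ => ?_
            rw [abs_mul]
            exact mul_le_mul_of_nonneg_left (norm_le_pi_norm z r') (abs_nonneg _)
        _ = (∑ r' : Fin m, |U r r'|) * ‖z‖ := by rw [← Finset.sum_mul]
        _ ≤ C * ‖z‖ := by
            refine mul_le_mul_of_nonneg_right ?_ (norm_nonneg _)
            exact Finset.single_le_sum (f := fun r => ∑ r' : Fin m, |U r r'|)
              (fun i _ => Finset.sum_nonneg fun _ _ => abs_nonneg _) (Finset.mem_univ r)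
    have hlip : LipschitzOnWith (2 * C * R).toNNReal v (Metric.closedBall 0 R) := by
      apply LipschitzOnWith.of_dist_le_mul
      intro x hx y hy
      have hxR : ‖x‖ ≤ R := by simpa using mem_closedBall_zero_iff.1 hx
      have hyR : ‖y‖ ≤ R := by simpa using mem_closedBall_zero_iff.1 hy
      have hK : ((2 * C * R).toNNReal : ℝ) = 2 * C * R :=
        Real.coe_toNNReal _ (by positivity)
      rw [hK]
      rw [dist_pi_le_iff (by positivity)]
      intro r
      have hdiff : v x r - v y r =
          -((x r - y r) * (∑ r' : Fin m, U r r' * x r')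
            + y r * (∑ r' : Fin m, U r r' * (x r' - y r'))) := by
        simp only [hvdef, Finset.mul_sum, ← Finset.sum_add_distrib]
        rw [neg_sub_neg]
        rw [show (∑ r' : Fin m, ((x r - y r) * (U r r' * x r')
          + y r * (U r r' * (x r' - y r')))) = ∑ r' : Fin m,
          (x r * (U r r' * x r') - y r * (U r r' * y r')) from
          Finset.sum_congr rfl fun r' _ => by ring]
        rw [Finset.sum_sub_distrib]
        ring
      have h1 : |x r - y r| ≤ dist x y := by
        rw [← Real.dist_eq]; exact dist_le_pi_dist x y r
      have h2 : |y r| ≤ R := le_trans (norm_le_pi_norm y r) hyR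
      have h3 : |∑ r' : Fin m, U r r' * x r'| ≤ C * R :=
        le_trans (hSb x r) (mul_le_mul_of_nonneg_left hxR hC0)
      have h4 : |∑ r' : Fin m, U r r' * (x r' - y r')| ≤ C * dist x y := by
        have := hSb (x - y) r
        simpa [dist_eq_norm, Pi.sub_apply] using this
      have hd0 : (0:ℝ) ≤ dist x y := dist_nonneg
      calc dist (v x r) (v y r) = |v x r - v y r| := Real.dist_eq _ _
        _ = |(x r - y r) * (∑ r' : Fin m, U r r' * x r')
            + y r * (∑ r' : Fin m, U r r' * (x r' - y r'))| := by rw [hdiff, abs_neg]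
        _ ≤ |x r - y r| * |∑ r' : Fin m, U r r' * x r'|
            + |y r| * |∑ r' : Fin m, U r r' * (x r' - y r')| := by
            refine le_trans (abs_add_le _ _) ?_
            rw [abs_mul, abs_mul]
        _ ≤ dist x y * (C * R) + R * (C * dist x y) := by
            gcongr
        _ = 2 * C * R * dist x y := by ring
    have habound : ∀ t ∈ Set.Ico (0:ℝ) T, a t ∈ Metric.closedBall (0 : Fin m → ℝ) R := by
      intro t ht
      rw [mem_closedBall_zero_iff]
      exact le_trans (hR₁ t ⟨ht.1, le_of_lt ht.2⟩) (le_max_left _ _)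
    have hgbound : ∀ t ∈ Set.Ico (0:ℝ) T, g t ∈ Metric.closedBall (0 : Fin m → ℝ) R := by
      intro t ht
      rw [mem_closedBall_zero_iff]
      refine le_trans ?_ (le_max_right R₁ ‖a₀‖)
      rw [show ‖g t‖ = ‖g t‖ from rfl]
      refine (pi_norm_le_iff_of_nonneg (norm_nonneg a₀)).2 fun r => ?_
      have hcc := hc1 t ht.1
      have hinv : (-2 * β * t + 1)⁻¹ ≤ 1 := by
        rw [inv_le_one_iff₀]; right; exact hcc
      have hinv0 : 0 ≤ (-2 * β * t + 1)⁻¹ := inv_nonneg.2 (by linarith)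
      simp only [hgdef, Real.norm_eq_abs, abs_mul]
      calc |(-2 * β * t + 1)⁻¹| * |a₀ r| ≤ 1 * ‖a₀‖ := by
            refine mul_le_mul ?_ (norm_le_pi_norm a₀ r) (abs_nonneg _) zero_le_one
            rw [abs_of_nonneg hinv0]; exact hinv
        _ = ‖a₀‖ := one_mul _
    have hgcont : ContinuousOn g (Set.Icc 0 T) := by
      intro t ht
      exact (continuousWithinAt_pi.2 fun r =>
        (hgderiv t ht.1 r).continuousAt.continuousWithinAt)
    have hf' : ∀ t ∈ Set.Ico (0:ℝ) T,
        HasDerivWithinAt a (v (a t)) (Set.Ici t) t := by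
      intro t ht
      refine (hasDerivWithinAt_pi.2 fun r => ?_).mono (Set.Ici_subset_Ici.2 ht.1)
      simpa only [hvdef] using hflow t ht.1 r
    have hg' : ∀ t ∈ Set.Ico (0:ℝ) T,
        HasDerivWithinAt g (v (g t)) (Set.Ici t) t := by
      intro t ht
      exact hasDerivWithinAt_pi.2 fun r => (hgderiv t ht.1 r).hasDerivWithinAt
    have hinit : a 0 = g 0 := by
      rw [ha0]; funext r; simp [hgdef]
    exact ODE_solution_unique_of_mem_Icc_right
      (v := fun _ x => v x) (s := fun _ => Metric.closedBall 0 R)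
      (fun _ _ => hlip) hacont hf' habound hgcont hg' hgbound hinit
      ⟨hT, le_rfl⟩
  have key' : ∀ t ∈ Set.Ici (0:ℝ), ∀ r, a t r = (-2 * β * t + 1)⁻¹ * a₀ r := by
    intro t ht r
    rw [key t ht]
  refine ⟨key', ?_, ?_⟩
  · intro t ht
    refine ⟨(-2 * β * t + 1)⁻¹, inv_pos.2 (by have := hc1 t ht; linarith), ?_⟩
    funext r
    rw [key' t ht r]
    simp [smul_eq_mul]
  · intro t ht r
    have hsum : (∑ r' : Fin m, U r r' * a t r') = (-2 * β * t + 1)⁻¹ * (-2 * β) := by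
      calc (∑ r' : Fin m, U r r' * a t r')
          = (-2 * β * t + 1)⁻¹ * ∑ r' : Fin m, U r r' * a₀ r' := by
            rw [Finset.mul_sum]
            exact Finset.sum_congr rfl fun r' _ => by rw [key' t ht r']; ring
        _ = _ := by rw [hUa₀ r]
    have hane : a₀ r ≠ 0 := (ha₀pos r).ne'
    have hc0 := hcne t ht
    have heq : -(a t r * ∑ r' : Fin m, U r r' * a t r')
        = 2 * β / a₀ r * a t r ^ 2 := by
      rw [hsum, key' t ht r, div_mul_eq_mul_div, eq_div_iff hane]
      ring
    exact heq ▸ hflow t ht r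
end

section
/- Let β < 0, let r = (r_1, …, r_n) ∈ ℝⁿ, and let q_j(t) = q_j(0)(−2βt + 1)^{r_j/β}, j = 1, …, n, with q_j(0) > 0, be the solution to the Ricci flow for a soliton metric nilpotent Lie algebra with soliton constant β and Ricci vector r relative to a stably Ricci-diagonal basis. Let r_min = min_j r_j. Then for each j, lim_{t → ∞} q_j(t)/(−2βt + 1)^{r_min/β} equals q_j(0) if r_j = r_min, and equals 0 if r_j > r_min. Consequently the volume-normalized metric collapses: its limit is a degenerate symmetric bilinear form that is positive definite exactly on the span of the basis vectors x_j with r_j = r_min (the eigenspace E_min for the minimal eigenvalue of the Ricci form) and vanishes on the remaining basis directions. -/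
/-- Let `β < 0`, `r` the Ricci vector, and
`q_j(t) = q_j(0) (-2βt+1)^{r_j/β}` the solution to the Ricci flow for a
soliton metric nilpotent Lie algebra with soliton constant `β` relative to a
stably Ricci-diagonal basis, with `q_j(0) > 0`.  Let `r_min = min_j r_j`.
Then `q_j(t)/(-2βt+1)^{r_min/β}` tends to `q_j(0)` when `r_j = r_min` and to
`0` otherwise; consequently the volume-normalized metric collapses to a
degenerate form which is positive definite exactly on the span of the `x_j`
with `r_j = r_min` and vanishes on the remaining directions. -/
theorem stmt13
    {n m : ℕ} {L : Type} [LieRing L] [LieAlgebra ℝ L]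
    [LieRing.IsNilpotent L]
    (Q : L →ₗ[ℝ] L →ₗ[ℝ] ℝ)
    (hQsymm : ∀ x y, Q x y = Q y x)
    (hQpos : ∀ x, x ≠ 0 → 0 < Q x x)
    (hnonab : ∃ x y : L, ⁅x, y⁆ ≠ 0)
    (b : Module.Basis (Fin n) ℝ L)
    (hb : ∀ i j, i ≠ j → Q (b i) (b j) = 0)
    (hstable : StablyRicciDiagonal Q b)
    (σ : Fin m → Fin n × Fin n × Fin n)
    (hσ : IsEnumerationOfLambda b σ)
    (adj : (L →ₗ[ℝ] L) → (L →ₗ[ℝ] L))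
    (hadj : ∀ (A : L →ₗ[ℝ] L) (x y : L), Q (adj A x) y = Q x (A y))
    (J : L → L →ₗ[ℝ] L)
    (hJ : ∀ x y z, Q (J x y) z = Q x ⁅y, z⁆)
    -- the inner product is a soliton inner product with soliton constant `β`
    (Ric : L →ₗ[ℝ] L)
    (hRic : ∀ x y, Q (Ric x) y = ricForm adj J x y)
    (β : ℝ) (hβ : β < 0)
    (hsoliton : ∀ x y : L,
      (Ric - β • LinearMap.id : L →ₗ[ℝ] L) ⁅x, y⁆
        = ⁅(Ric - β • LinearMap.id : L →ₗ[ℝ] L) x, y⁆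
          + ⁅x, (Ric - β • LinearMap.id : L →ₗ[ℝ] L) y⁆)
    -- the Ricci vector `r` and its minimum `rmin`
    (r : Fin n → ℝ)
    (hr : ∀ j, r j = ricForm adj J (b j) (b j) / Q (b j) (b j))
    (rmin : ℝ)
    (hrmin : IsLeast (Set.range r) rmin)
    -- the solution of the Ricci flow
    (q : ℝ → Fin n → ℝ)
    (hq0 : ∀ j, 0 < q 0 j)
    (hq : ∀ t ∈ Set.Ici (0:ℝ), ∀ j,
      q t j = q 0 j * (-2 * β * t + 1) ^ (r j / β)) :
    (∀ j, Filter.Tendsto (fun t => q t j / (-2 * β * t + 1) ^ (rmin / β))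
        Filter.atTop (nhds (if r j = rmin then q 0 j else 0)))
    ∧ (∀ v : Fin n → ℝ, (∀ j, r j ≠ rmin → v j = 0) → v ≠ 0 →
        0 < ∑ j, (if r j = rmin then q 0 j else 0) * v j ^ 2)
    ∧ (∀ v : Fin n → ℝ, (∀ j, r j = rmin → v j = 0) →
        ∑ j, (if r j = rmin then q 0 j else 0) * v j ^ 2 = 0) := by
  
  have hxt : ∀ t : ℝ, 0 ≤ t → (0:ℝ) < -2 * β * t + 1 := by
    intro t ht
    nlinarith
  have hbase : Filter.Tendsto (fun t : ℝ => -2 * β * t + 1) Filter.atTop Filter.atTop := by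
    apply Filter.tendsto_atTop_add_const_right
    exact Filter.Tendsto.const_mul_atTop (by linarith) Filter.tendsto_id
  refine ⟨?_, ?_, ?_⟩
  · intro j
    have hle : rmin ≤ r j := hrmin.2 ⟨j, rfl⟩
    have key : ∀ t : ℝ, 0 ≤ t →
        q t j / (-2 * β * t + 1) ^ (rmin / β)
          = q 0 j * (-2 * β * t + 1) ^ ((r j - rmin) / β) := by
      intro t ht
      have hx := hxt t ht
      rw [hq t ht j, sub_div, Real.rpow_sub hx, mul_div_assoc]
    have hev : ∀ᶠ t in Filter.atTop,
        q 0 j * (-2 * β * t + 1) ^ ((r j - rmin) / β)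
          = q t j / (-2 * β * t + 1) ^ (rmin / β) := by
      filter_upwards [Filter.eventually_ge_atTop (0:ℝ)] with t ht
      exact (key t ht).symm
    refine Filter.Tendsto.congr' hev ?_
    by_cases hj : r j = rmin
    · simp only [hj, if_true, sub_self, zero_div, Real.rpow_zero, mul_one]
      exact tendsto_const_nhds
    · have hlt : rmin < r j := lt_of_le_of_ne hle (Ne.symm hj)
      have hexp : (r j - rmin) / β < 0 := div_neg_of_pos_of_neg (by linarith) hβ
      have h0 : Filter.Tendsto (fun t : ℝ => (-2 * β * t + 1) ^ ((r j - rmin) / β))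
          Filter.atTop (nhds 0) := by
        have := (tendsto_rpow_neg_atTop (y := -((r j - rmin) / β)) (by linarith)).comp hbase
        simpa [Function.comp_def] using this
      simp only [hj, if_false]
      simpa using h0.const_mul (q 0 j)
  · intro v hv hvne
    obtain ⟨j, hj⟩ : ∃ j, v j ≠ 0 := by
      by_contra h
      push_neg at h
      exact hvne (funext h)
    have hjr : r j = rmin := by
      by_contra h
      exact hj (hv j h)
    apply Finset.sum_pos'
    · intro i _
      by_cases h : r i = rmin
      · simp only [h, if_true]
        have := hq0 i
        positivity
      · simp [h]
    · exact ⟨j, Finset.mem_univ j, by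
        simp only [hjr, if_true]
        have := hq0 j
        positivity⟩
  · intro v hv
    apply Finset.sum_eq_zero
    intro i _
    by_cases h : r i = rmin
    · simp [hv i h]
    · simp [h]
end

section
/- Let c > 0 and define q_1(t) = q_2(t) = (3ct + 1)^{1/3} and q_3(t) = (3ct + 1)^{−1/3} for t ≥ 0. Then a(t) := c·q_3(t)/(q_1(t) q_2(t)) = c(3ct + 1)^{−1}, the function a satisfies a′ = −3a² with a(0) = c, and (q_1, q_2, q_3) satisfies the Ricci flow system for the three-dimensional Heisenberg algebra: q_1′/q_1 = a, q_2′/q_2 = a, q_3′/q_3 = −a, with q_1(0) = q_2(0) = q_3(0) = 1. -/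
/-- Let `c > 0`, `q₁(t) = q₂(t) = (3ct+1)^{1/3}` and
`q₃(t) = (3ct+1)^{-1/3}`.  Then `a(t) := c q₃(t)/(q₁(t) q₂(t)) = c (3ct+1)⁻¹`
satisfies `a' = -3a²` with `a(0) = c`, and `(q₁, q₂, q₃)` satisfies the Ricci
flow system for the three-dimensional Heisenberg algebra
`q₁'/q₁ = a`, `q₂'/q₂ = a`, `q₃'/q₃ = -a`, with `q₁(0) = q₂(0) = q₃(0) = 1`. -/
theorem stmt15
    (c : ℝ) (hc : 0 < c)
    (q₁ q₂ q₃ a : ℝ → ℝ)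
    (hq₁ : ∀ t, q₁ t = (3 * c * t + 1) ^ ((1:ℝ)/3))
    (hq₂ : ∀ t, q₂ t = (3 * c * t + 1) ^ ((1:ℝ)/3))
    (hq₃ : ∀ t, q₃ t = (3 * c * t + 1) ^ (-(1:ℝ)/3))
    (ha : ∀ t, a t = c * q₃ t / (q₁ t * q₂ t)) :
    (∀ t ∈ Set.Ici (0:ℝ), a t = c * (3 * c * t + 1)⁻¹)
    ∧ a 0 = c
    ∧ (∀ t ∈ Set.Ici (0:ℝ), HasDerivWithinAt a (-3 * (a t) ^ 2) (Set.Ici 0) t)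
    ∧ q₁ 0 = 1 ∧ q₂ 0 = 1 ∧ q₃ 0 = 1
    ∧ (∀ t ∈ Set.Ici (0:ℝ), HasDerivWithinAt q₁ (q₁ t * a t) (Set.Ici 0) t)
    ∧ (∀ t ∈ Set.Ici (0:ℝ), HasDerivWithinAt q₂ (q₂ t * a t) (Set.Ici 0) t)
    ∧ (∀ t ∈ Set.Ici (0:ℝ), HasDerivWithinAt q₃ (-(q₃ t * a t)) (Set.Ici 0) t) := by
  have hu : ∀ t : ℝ, t ∈ Set.Ici (0:ℝ) → (0:ℝ) < 3 * c * t + 1 := by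
    intro t ht
    have ht' : (0:ℝ) ≤ t := ht
    have : 0 ≤ 3 * c * t := by positivity
    linarith
  have hder : ∀ t : ℝ, HasDerivAt (fun s : ℝ => 3 * c * s + 1) (3 * c) t := by
    intro t
    simpa using ((hasDerivAt_id t).const_mul (3 * c)).add_const 1
  -- part 1
  have h1 : ∀ t ∈ Set.Ici (0:ℝ), a t = c * (3 * c * t + 1)⁻¹ := by
    intro t ht
    have hu' := hu t ht
    have e1 : (3 * c * t + 1) ^ ((1:ℝ)/3) * (3 * c * t + 1) ^ ((1:ℝ)/3)
        = (3 * c * t + 1) ^ ((2:ℝ)/3) := by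
      rw [← Real.rpow_add hu']; norm_num
    have e2 : (3 * c * t + 1) ^ (-(1:ℝ)/3) / (3 * c * t + 1) ^ ((2:ℝ)/3)
        = (3 * c * t + 1)⁻¹ := by
      rw [← Real.rpow_sub hu']
      norm_num [Real.rpow_neg_one]
    rw [ha, hq₁, hq₂, hq₃, e1, mul_div_assoc, e2]
  have h0 : a 0 = c := by simpa using h1 0 Set.self_mem_Ici
  refine ⟨h1, h0, ?_, ?_, ?_, ?_, ?_, ?_, ?_⟩
  · -- a' = -3 a^2
    intro t ht
    have hu' := hu t ht
    have hda : HasDerivAt (fun s : ℝ => c * (3 * c * s + 1)⁻¹)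
        (c * (-(3 * c) / (3 * c * t + 1) ^ 2)) t :=
      ((hder t).inv (ne_of_gt hu')).const_mul c
    have h := (hda.hasDerivWithinAt (s := Set.Ici 0)).congr h1 (h1 t ht)
    convert h using 1
    · rfl
    · rfl
    rw [h1 t ht]
    field_simp
  · rw [hq₁]; norm_num
  · rw [hq₂]; norm_num
  · rw [hq₃]; norm_num
  · intro t ht
    have hu' := hu t ht
    have hda : HasDerivAt (fun s : ℝ => (3 * c * s + 1) ^ ((1:ℝ)/3))
        (3 * c * ((1:ℝ)/3) * (3 * c * t + 1) ^ ((1:ℝ)/3 - 1)) t :=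
      (hder t).rpow_const (Or.inl (ne_of_gt hu'))
    have h := (hda.hasDerivWithinAt (s := Set.Ici 0)).congr
      (fun s _ => hq₁ s) (hq₁ t)
    convert h using 1
    · rfl
    · rfl
    have e : (3 * c * t + 1) ^ ((1:ℝ)/3) * (3 * c * t + 1) ^ (-(1:ℝ))
        = (3 * c * t + 1) ^ ((1:ℝ)/3 - 1) := by
      rw [← Real.rpow_add hu']; norm_num
    rw [hq₁, h1 t ht, ← Real.rpow_neg_one (3 * c * t + 1), mul_comm c,
      ← mul_assoc, e]
    ring
  · intro t ht
    have hu' := hu t ht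
    have hda : HasDerivAt (fun s : ℝ => (3 * c * s + 1) ^ ((1:ℝ)/3))
        (3 * c * ((1:ℝ)/3) * (3 * c * t + 1) ^ ((1:ℝ)/3 - 1)) t :=
      (hder t).rpow_const (Or.inl (ne_of_gt hu'))
    have h := (hda.hasDerivWithinAt (s := Set.Ici 0)).congr
      (fun s _ => hq₂ s) (hq₂ t)
    convert h using 1
    · rfl
    · rfl
    have e : (3 * c * t + 1) ^ ((1:ℝ)/3) * (3 * c * t + 1) ^ (-(1:ℝ))
        = (3 * c * t + 1) ^ ((1:ℝ)/3 - 1) := by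
      rw [← Real.rpow_add hu']; norm_num
    rw [hq₂, h1 t ht, ← Real.rpow_neg_one (3 * c * t + 1), mul_comm c,
      ← mul_assoc, e]
    ring
  · intro t ht
    have hu' := hu t ht
    have hda : HasDerivAt (fun s : ℝ => (3 * c * s + 1) ^ (-(1:ℝ)/3))
        (3 * c * (-(1:ℝ)/3) * (3 * c * t + 1) ^ (-(1:ℝ)/3 - 1)) t :=
      (hder t).rpow_const (Or.inl (ne_of_gt hu'))
    have h := (hda.hasDerivWithinAt (s := Set.Ici 0)).congr
      (fun s _ => hq₃ s) (hq₃ t)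
    convert h using 1
    · rfl
    · rfl
    have e : (3 * c * t + 1) ^ (-(1:ℝ)/3) * (3 * c * t + 1) ^ (-(1:ℝ))
        = (3 * c * t + 1) ^ (-(1:ℝ)/3 - 1) := by
      rw [← Real.rpow_add hu']; norm_num
    rw [hq₃, h1 t ht, ← Real.rpow_neg_one (3 * c * t + 1), mul_comm c,
      ← mul_assoc, e]
    ring
end

section
/- Consider the planar system s_1′ = −s_1(2s_1 − s_2 − 2), s_2′ = −s_2(−s_1 + 2s_2 − 2) on the open quadrant (0,∞)². For every initial condition s(0) ∈ (0,∞)², the maximal solution is defined for all t ≥ 0, remains in (0,∞)², and converges to the equilibrium point (2, 2) as t → ∞. -/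
open Set Filter Real



noncomputable def phi (x : ℝ) : ℝ := x - 2 * Real.log x

lemma phi_ge {x : ℝ} (hx : 0 < x) : 2 - 2 * Real.log 2 ≤ phi x := by
  have h := Real.log_le_sub_one_of_pos (show (0:ℝ) < x / 2 by positivity)
  rw [Real.log_div (ne_of_gt hx) (by norm_num)] at h
  unfold phi; linarith

lemma phi_gt {x : ℝ} (hx : 0 < x) (hne : x ≠ 2) : 2 - 2 * Real.log 2 < phi x := by
  have h := Real.log_lt_sub_one_of_pos (show (0:ℝ) < x / 2 by positivity)
    (by intro h; apply hne; linarith [(div_eq_one_iff_eq (show (2:ℝ) ≠ 0 by norm_num)).mp h])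
  rw [Real.log_div (ne_of_gt hx) (by norm_num)] at h
  unfold phi; linarith

lemma phi_bounds {x c : ℝ} (hx : 0 < x) (hc : 0 ≤ c) (h : phi x ≤ c) :
    Real.exp (-(c/2)) ≤ x ∧ x ≤ (2 + Real.sqrt (4 + c))^2 := by
  unfold phi at h
  constructor
  · have h1 : -(c/2) ≤ Real.log x := by linarith
    calc Real.exp (-(c/2)) ≤ Real.exp (Real.log x) := Real.exp_le_exp.mpr h1
      _ = x := Real.exp_log hx
  · have hs : Real.log x ≤ 2 * Real.sqrt x := by
      have h2 : Real.log (Real.sqrt x) ≤ Real.sqrt x - 1 :=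
        Real.log_le_sub_one_of_pos (Real.sqrt_pos.mpr hx)
      rw [Real.log_sqrt hx.le] at h2
      linarith
    have hx2 : x ≤ 4 * Real.sqrt x + c := by linarith
    have hsq : Real.sqrt x ^ 2 = x := Real.sq_sqrt hx.le
    have h4 : Real.sqrt (4 + c) ^ 2 = 4 + c := Real.sq_sqrt (by linarith)
    have hle : Real.sqrt x ≤ 2 + Real.sqrt (4 + c) := by
      by_contra hlt
      push_neg at hlt
      have h5 : (0:ℝ) ≤ Real.sqrt (4 + c) := Real.sqrt_nonneg _
      nlinarith [Real.sqrt_nonneg x]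
    nlinarith [Real.sqrt_nonneg x]


lemma antitoneOn_Icc_of_hasDerivWithinAt {f f' : ℝ → ℝ} {a b : ℝ}
    (hf : ∀ t ∈ Icc a b, HasDerivWithinAt f (f' t) (Icc a b) t)
    (h' : ∀ t ∈ Icc a b, f' t ≤ 0) : AntitoneOn f (Icc a b) := by
  apply antitoneOn_of_deriv_nonpos (convex_Icc a b)
  · exact fun t ht => (hf t ht).continuousWithinAt
  · intro t ht
    rw [interior_Icc] at ht
    exact ((hf t (Ioo_subset_Icc_self ht)).hasDerivAt
      (Icc_mem_nhds ht.1 ht.2)).differentiableAt.differentiableWithinAt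
  · intro t ht
    rw [interior_Icc] at ht
    rw [((hf t (Ioo_subset_Icc_self ht)).hasDerivAt (Icc_mem_nhds ht.1 ht.2)).deriv]
    exact h' t (Ioo_subset_Icc_self ht)

lemma pos_of_linear_ode {f c : ℝ → ℝ} {T : ℝ} (hT : 0 ≤ T)
    (hc : ContinuousOn c (Icc 0 T))
    (hf : ∀ t ∈ Icc 0 T, HasDerivWithinAt f (c t * f t) (Icc 0 T) t)
    (h0 : 0 < f 0) : ∀ t ∈ Icc 0 T, 0 < f t := by
  set cl : ℝ → ℝ := fun t => c (max 0 (min t T)) with hcl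
  have hmem : ∀ t : ℝ, max 0 (min t T) ∈ Icc 0 T := fun t =>
    ⟨le_max_left _ _, max_le hT (min_le_right _ _)⟩
  have hclcont : Continuous cl :=
    hc.comp_continuous (continuous_const.max (continuous_id.min continuous_const)) hmem
  have hcleq : ∀ t ∈ Icc 0 T, cl t = c t := by
    intro t ht
    simp only [hcl]
    rw [min_eq_left ht.2, max_eq_right ht.1]
  set A : ℝ → ℝ := fun t => ∫ u in (0:ℝ)..t, cl u with hA
  have hA' : ∀ t : ℝ, HasDerivAt A (cl t) t := by
    intro t
    exact intervalIntegral.integral_hasDerivAt_right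
      (hclcont.intervalIntegrable _ _)
      (hclcont.stronglyMeasurable.stronglyMeasurableAtFilter)
      hclcont.continuousAt
  set g : ℝ → ℝ := fun t => f t * Real.exp (-A t) with hg
  have hg' : ∀ t ∈ Icc 0 T, HasDerivWithinAt g 0 (Icc 0 T) t := by
    intro t ht
    have h1 : HasDerivWithinAt (fun u => Real.exp (-A u)) (Real.exp (-A t) * (-cl t)) (Icc 0 T) t := by
      exact ((hA' t).neg.exp).hasDerivWithinAt
    have h2 := (hf t ht).mul h1
    have h3 : (0:ℝ) = c t * f t * rexp (-A t) + f t * (rexp (-A t) * -cl t) := by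
      rw [hcleq t ht]; ring
    exact h2.congr_deriv h3.symm
  have hconst : ∀ t ∈ Icc 0 T, g t = g 0 := by
    intro t ht
    have := Convex.norm_image_sub_le_of_norm_hasDerivWithin_le (C := 0) hg'
      (fun t _ => by simp) (convex_Icc 0 T) (left_mem_Icc.mpr hT) ht
    simpa [sub_eq_zero] using this
  intro t ht
  have h3 := hconst t ht
  have h4 : g 0 > 0 := by
    simp only [hg]
    positivity
  have h5 : Real.exp (-A t) > 0 := Real.exp_pos _
  have h6 : f t * Real.exp (-A t) = g t := rfl
  nlinarith [h3, h4, h5, h6]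

lemma lyap {f g : ℝ → ℝ} {T δ : ℝ}
    (hf : ∀ t ∈ Icc 0 T, HasDerivWithinAt f (-(f t * (2 * f t - g t - 2))) (Icc 0 T) t)
    (hg : ∀ t ∈ Icc 0 T, HasDerivWithinAt g (-(g t * (-f t + 2 * g t - 2))) (Icc 0 T) t)
    (hfpos : ∀ t ∈ Icc 0 T, 0 < f t) (hgpos : ∀ t ∈ Icc 0 T, 0 < g t)
    (hδ : ∀ t ∈ Icc 0 T, δ ≤ 2*(f t - 2)^2 - 2*(f t - 2)*(g t - 2) + 2*(g t - 2)^2) :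
    AntitoneOn (fun t => phi (f t) + phi (g t) + δ * t) (Icc 0 T) := by
  apply antitoneOn_Icc_of_hasDerivWithinAt
    (f' := fun t => -(2*(f t - 2)^2 - 2*(f t - 2)*(g t - 2) + 2*(g t - 2)^2) + δ)
  · intro t ht
    have hfne := ne_of_gt (hfpos t ht)
    have hgne := ne_of_gt (hgpos t ht)
    have hlf : HasDerivWithinAt (fun u => Real.log (f u))
        ((f t)⁻¹ * -(f t * (2 * f t - g t - 2))) (Icc 0 T) t :=
      (Real.hasDerivAt_log hfne).comp_hasDerivWithinAt t (hf t ht)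
    have hlg : HasDerivWithinAt (fun u => Real.log (g u))
        ((g t)⁻¹ * -(g t * (-f t + 2 * g t - 2))) (Icc 0 T) t :=
      (Real.hasDerivAt_log hgne).comp_hasDerivWithinAt t (hg t ht)
    have h1 := ((hf t ht).sub (hlf.const_mul 2)).add ((hg t ht).sub (hlg.const_mul 2))
    have h2 := h1.add (((hasDerivAt_id t).const_mul δ).hasDerivWithinAt)
    have h3 : HasDerivWithinAt (fun u => phi (f u) + phi (g u) + δ * u)
        (-(f t * (2 * f t - g t - 2)) - 2 * ((f t)⁻¹ * -(f t * (2 * f t - g t - 2))) +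
          (-(g t * (-f t + 2 * g t - 2)) - 2 * ((g t)⁻¹ * -(g t * (-f t + 2 * g t - 2)))) +
          δ * 1) (Icc 0 T) t := h2
    convert h3 using 1
    field_simp
    ring
  · intro t ht
    linarith [hδ t ht]

lemma key {f g : ℝ → ℝ} (h0f : 0 < f 0) (h0g : 0 < g 0)
    (hder : ∀ t ∈ Ici (0:ℝ),
      HasDerivWithinAt f (-(f t * (2 * f t - g t - 2))) (Ici 0) t ∧
      HasDerivWithinAt g (-(g t * (-f t + 2 * g t - 2))) (Ici 0) t) :
    (∀ t ∈ Ici (0:ℝ), 0 < f t ∧ 0 < g t) ∧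
      Tendsto f atTop (nhds 2) ∧ Tendsto g atTop (nhds 2) := by
  -- derivatives on compact intervals
  have hfI : ∀ T : ℝ, ∀ t ∈ Icc 0 T,
      HasDerivWithinAt f (-(f t * (2 * f t - g t - 2))) (Icc 0 T) t :=
    fun T t ht => ((hder t ht.1).1).mono (fun u hu => hu.1)
  have hgI : ∀ T : ℝ, ∀ t ∈ Icc 0 T,
      HasDerivWithinAt g (-(g t * (-f t + 2 * g t - 2))) (Icc 0 T) t :=
    fun T t ht => ((hder t ht.1).2).mono (fun u hu => hu.1)
  have hfc : ∀ T : ℝ, ContinuousOn f (Icc 0 T) :=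
    fun T t ht => (hfI T t ht).continuousWithinAt
  have hgc : ∀ T : ℝ, ContinuousOn g (Icc 0 T) :=
    fun T t ht => (hgI T t ht).continuousWithinAt
  -- positivity on compact intervals
  have hfpos : ∀ T : ℝ, 0 ≤ T → ∀ t ∈ Icc 0 T, 0 < f t := by
    intro T hT
    apply pos_of_linear_ode hT (c := fun u => -(2 * f u - g u - 2))
    · exact ((continuousOn_const.mul (hfc T)).sub (hgc T) |>.sub continuousOn_const).neg
    · intro t ht
      have := hfI T t ht
      convert this using 1
      ring
    · exact h0f
  have hgpos : ∀ T : ℝ, 0 ≤ T → ∀ t ∈ Icc 0 T, 0 < g t := by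
    intro T hT
    apply pos_of_linear_ode hT (c := fun u => -(-f u + 2 * g u - 2))
    · exact (((hfc T).neg.add (continuousOn_const.mul (hgc T))).sub continuousOn_const).neg
    · intro t ht
      have := hgI T t ht
      convert this using 1
      ring
    · exact h0g
  have hpos : ∀ t ∈ Ici (0:ℝ), 0 < f t ∧ 0 < g t := by
    intro t ht
    exact ⟨hfpos t ht t ⟨ht, le_refl t⟩, hgpos t ht t ⟨ht, le_refl t⟩⟩
  refine ⟨hpos, ?_⟩
  -- the Lyapunov function along the trajectory
  set VT : ℝ → ℝ := fun t => phi (f t) + phi (g t) with hVT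
  have hQ0 : ∀ T : ℝ, ∀ t ∈ Icc 0 T,
      (0:ℝ) ≤ 2*(f t - 2)^2 - 2*(f t - 2)*(g t - 2) + 2*(g t - 2)^2 := by
    intro T t ht
    nlinarith [sq_nonneg (f t - g t), sq_nonneg (f t - 2), sq_nonneg (g t - 2)]
  have hanti : ∀ a b : ℝ, 0 ≤ a → a ≤ b → VT b ≤ VT a := by
    intro a b ha hab
    have hb : (0:ℝ) ≤ b := le_trans ha hab
    have := lyap (T := b) (δ := 0) (hfI b) (hgI b) (hfpos b hb) (hgpos b hb) (hQ0 b)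
    have h2 := this (a := a) (b := b) ⟨ha, hab⟩ ⟨hb, le_refl b⟩ hab
    simpa using h2
  -- a priori bounds
  have hlog2 : Real.log 2 < 1 := by
    have := Real.log_lt_sub_one_of_pos (show (0:ℝ) < 2 by norm_num) (by norm_num)
    linarith
  set V0 : ℝ := phi (f 0) + phi (g 0) with hV0
  set c : ℝ := V0 - (2 - 2 * Real.log 2) with hc
  have hc0 : 0 < c := by
    have h1 := phi_ge h0f
    have h2 := phi_ge h0g
    simp only [hc, hV0]
    linarith
  set α : ℝ := Real.exp (-(c/2)) with hα
  set β : ℝ := (2 + Real.sqrt (4 + c))^2 with hβ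
  have hαpos : 0 < α := Real.exp_pos _
  have hbox : ∀ t ∈ Ici (0:ℝ), f t ∈ Icc α β ∧ g t ∈ Icc α β := by
    intro t ht
    have hVt : VT t ≤ V0 := hanti 0 t le_rfl ht
    have hgf := phi_ge (hpos t ht).2
    have hff := phi_ge (hpos t ht).1
    simp only [hVT] at hVt
    have hf2 : phi (f t) ≤ c := by rw [hc]; linarith
    have hg2 : phi (g t) ≤ c := by rw [hc]; linarith
    exact ⟨phi_bounds (hpos t ht).1 hc0.le hf2, phi_bounds (hpos t ht).2 hc0.le hg2⟩
  -- the infimum of the Lyapunov function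
  have hVmin : ∀ t ∈ Ici (0:ℝ), 4 - 4 * Real.log 2 ≤ VT t := by
    intro t ht
    have h1 := phi_ge (hpos t ht).1
    have h2 := phi_ge (hpos t ht).2
    simp only [hVT]; linarith
  set L : ℝ := sInf (VT '' Ici 0) with hL
  have hbddS : BddBelow (VT '' Ici 0) := by
    refine ⟨4 - 4*Real.log 2, ?_⟩
    rintro x ⟨t, ht, rfl⟩
    exact hVmin t ht
  have hneS : (VT '' Ici 0).Nonempty := ⟨VT 0, 0, self_mem_Ici, rfl⟩
  have hLle : ∀ t ∈ Ici (0:ℝ), L ≤ VT t := fun t ht => csInf_le hbddS ⟨t, ht, rfl⟩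
  have htendV : Tendsto VT atTop (nhds L) := by
    rw [Metric.tendsto_atTop]
    intro ε hε
    obtain ⟨x, ⟨t₀, ht₀, rfl⟩, hx⟩ := Real.lt_sInf_add_pos hneS hε
    refine ⟨t₀, fun t ht => ?_⟩
    have h1 : VT t ≤ VT t₀ := hanti t₀ t ht₀ ht
    have h2 : L ≤ VT t := hLle t (le_trans ht₀ ht)
    rw [Real.dist_eq, abs_lt]
    constructor <;> linarith
  -- continuity of V on the box
  set box : Set (ℝ × ℝ) := Icc α β ×ˢ Icc α β with hboxdef
  have hboxmem : ∀ t ∈ Ici (0:ℝ), (f t, g t) ∈ box := by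
    intro t ht
    exact ⟨(hbox t ht).1, (hbox t ht).2⟩
  have hlogf : ContinuousOn (fun p : ℝ × ℝ => Real.log p.1) box := by
    apply Real.continuousOn_log.comp continuousOn_fst
    intro p hp
    simp only [mem_compl_iff, mem_singleton_iff]
    exact ne_of_gt (lt_of_lt_of_le hαpos hp.1.1)
  have hlogg : ContinuousOn (fun p : ℝ × ℝ => Real.log p.2) box := by
    apply Real.continuousOn_log.comp continuousOn_snd
    intro p hp
    simp only [mem_compl_iff, mem_singleton_iff]
    exact ne_of_gt (lt_of_lt_of_le hαpos hp.2.1)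
  have hVcont : ContinuousOn (fun p : ℝ × ℝ => phi p.1 + phi p.2) box := by
    simp only [phi]
    exact (continuousOn_fst.sub (continuousOn_const.mul hlogf)).add
      (continuousOn_snd.sub (continuousOn_const.mul hlogg))
  have hboxclosed : IsClosed box := (isClosed_Icc.prod isClosed_Icc)
  have hboxcomp : IsCompact box := (isCompact_Icc.prod isCompact_Icc)
  -- the limit of V is its minimum
  have hLeq : L = 4 - 4 * Real.log 2 := by
    have hge : 4 - 4 * Real.log 2 ≤ L := by
      apply le_csInf hneS
      rintro x ⟨t, ht, rfl⟩
      exact hVmin t ht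
    rcases eq_or_lt_of_le hge with h | hgt
    · exact h.symm
    exfalso
    set S : Set (ℝ × ℝ) := box ∩ (fun p : ℝ × ℝ => phi p.1 + phi p.2) ⁻¹' (Ici L) with hS
    have hSclosed : IsClosed S :=
      hVcont.preimage_isClosed_of_isClosed hboxclosed isClosed_Ici
    have hScomp : IsCompact S := hboxcomp.of_isClosed_subset hSclosed inter_subset_left
    have hmemS : ∀ t ∈ Ici (0:ℝ), (f t, g t) ∈ S := by
      intro t ht
      exact ⟨hboxmem t ht, by
        simp only [mem_preimage, mem_Ici]
        exact hLle t ht⟩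
    have hQcont : Continuous (fun p : ℝ × ℝ =>
        2*(p.1-2)^2 - 2*(p.1-2)*(p.2-2) + 2*(p.2-2)^2) := by fun_prop
    obtain ⟨p₀, hp₀S, hp₀min⟩ :=
      hScomp.exists_isMinOn ⟨(f 0, g 0), hmemS 0 self_mem_Ici⟩ hQcont.continuousOn
    set δ : ℝ := 2*(p₀.1-2)^2 - 2*(p₀.1-2)*(p₀.2-2) + 2*(p₀.2-2)^2 with hδdef
    have hp₀ne : p₀.1 ≠ 2 ∨ p₀.2 ≠ 2 := by
      by_contra h
      push_neg at h
      have h22 := hp₀S.2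
      simp only [mem_preimage, mem_Ici, h.1, h.2, phi] at h22
      rw [show Real.log 2 = Real.log 2 from rfl] at h22
      have : L ≤ 4 - 4 * Real.log 2 := by linarith
      linarith
    have hδpos : 0 < δ := by
      rcases hp₀ne with h | h
      · have h1 : 0 < (p₀.1 - 2)^2 := sq_pos_of_ne_zero (sub_ne_zero.mpr h)
        nlinarith [sq_nonneg (p₀.1 - p₀.2), sq_nonneg (p₀.2 - 2)]
      · have h1 : 0 < (p₀.2 - 2)^2 := sq_pos_of_ne_zero (sub_ne_zero.mpr h)
        nlinarith [sq_nonneg (p₀.1 - p₀.2), sq_nonneg (p₀.1 - 2)]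
    have hδle : ∀ t ∈ Ici (0:ℝ), δ ≤
        2*(f t - 2)^2 - 2*(f t - 2)*(g t - 2) + 2*(g t - 2)^2 := by
      intro t ht
      exact isMinOn_iff.mp hp₀min (f t, g t) (hmemS t ht)
    set T : ℝ := (V0 - (4 - 4*Real.log 2))/δ + 1 with hT
    have hV00 : 4 - 4*Real.log 2 ≤ V0 := hVmin 0 self_mem_Ici
    have hT0 : 0 ≤ T := by
      have h5 : 0 ≤ (V0 - (4 - 4*Real.log 2))/δ := div_nonneg (by linarith) hδpos.le
      rw [hT]; linarith
    have hlyap := lyap (T := T) (δ := δ) (hfI T) (hgI T) (hfpos T hT0) (hgpos T hT0)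
      (fun t htt => hδle t htt.1)
    have h2 := hlyap (a := 0) (b := T) ⟨le_rfl, hT0⟩ ⟨hT0, le_rfl⟩ hT0
    simp only at h2
    have h3 : δ * T = (V0 - (4 - 4*Real.log 2)) + δ := by
      rw [hT]
      field_simp
    have h4 := hVmin T hT0
    simp only [hVT] at h4 h2
    -- h2 : phi (f T) + phi (g T) + δ * T ≤ phi (f 0) + phi (g 0) + δ * 0
    rw [h3] at h2
    simp only [hV0] at h2
    linarith
  -- convergence
  have hclaim : ∀ ε : ℝ, 0 < ε → ∃ N : ℝ, ∀ t ≥ N, |f t - 2| < ε ∧ |g t - 2| < ε := by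
    intro ε hε
    set K' : Set (ℝ × ℝ) := box ∩ {p : ℝ × ℝ | ε ≤ |p.1 - 2| ∨ ε ≤ |p.2 - 2|} with hK'def
    have hK'closed : IsClosed K' := by
      apply hboxclosed.inter
      have h1 : IsClosed {p : ℝ × ℝ | ε ≤ |p.1 - 2|} :=
        isClosed_le continuous_const ((continuous_fst.sub continuous_const).abs)
      have h2 : IsClosed {p : ℝ × ℝ | ε ≤ |p.2 - 2|} :=
        isClosed_le continuous_const ((continuous_snd.sub continuous_const).abs)
      exact h1.union h2
    have hK'comp : IsCompact K' := hboxcomp.of_isClosed_subset hK'closed inter_subset_left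
    by_cases hne : K'.Nonempty
    · obtain ⟨p₁, hp₁K, hp₁min⟩ :=
        hK'comp.exists_isMinOn hne (hVcont.mono inter_subset_left)
      set m : ℝ := phi p₁.1 + phi p₁.2 with hm
      have hp₁pos1 : 0 < p₁.1 := lt_of_lt_of_le hαpos hp₁K.1.1.1
      have hp₁pos2 : 0 < p₁.2 := lt_of_lt_of_le hαpos hp₁K.1.2.1
      have hmgt : 4 - 4 * Real.log 2 < m := by
        rcases hp₁K.2 with h | h
        · have hne2 : p₁.1 ≠ 2 := by
            intro heq
            rw [heq] at h
            simp at h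
            linarith
          have := phi_gt hp₁pos1 hne2
          have := phi_ge hp₁pos2
          simp only [hm]; linarith
        · have hne2 : p₁.2 ≠ 2 := by
            intro heq
            rw [heq] at h
            simp at h
            linarith
          have := phi_gt hp₁pos2 hne2
          have := phi_ge hp₁pos1
          simp only [hm]; linarith
      have hev : ∀ᶠ t in atTop, VT t < m := by
        apply htendV.eventually_lt_const
        rw [hLeq]; exact hmgt
      rw [eventually_atTop] at hev
      obtain ⟨N, hN⟩ := hev
      refine ⟨max N 0, fun t ht => ?_⟩
      have ht0 : (0:ℝ) ≤ t := le_trans (le_max_right N 0) ht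
      have htN : N ≤ t := le_trans (le_max_left N 0) ht
      have hnotin : (f t, g t) ∉ K' := by
        intro hin
        have hle := isMinOn_iff.mp hp₁min (f t, g t) hin
        have hlt := hN t htN
        simp only [hVT] at hlt
        simp only [hm] at hle
        linarith
      have hinbox := hboxmem t ht0
      by_contra hcon
      apply hnotin
      refine ⟨hinbox, ?_⟩
      simp only [mem_setOf_eq]
      by_contra hcon2
      push_neg at hcon2
      exact hcon ⟨hcon2.1, hcon2.2⟩
    · refine ⟨0, fun t ht => ?_⟩
      have hinbox := hboxmem t ht
      by_contra hcon
      apply hne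
      refine ⟨(f t, g t), hinbox, ?_⟩
      simp only [mem_setOf_eq]
      by_contra hcon2
      push_neg at hcon2
      exact hcon ⟨hcon2.1, hcon2.2⟩
  constructor
  · rw [Metric.tendsto_atTop]
    intro ε hε
    obtain ⟨N, hN⟩ := hclaim ε hε
    exact ⟨N, fun t ht => by rw [Real.dist_eq]; exact (hN t ht).1⟩
  · rw [Metric.tendsto_atTop]
    intro ε hε
    obtain ⟨N, hN⟩ := hclaim ε hε
    exact ⟨N, fun t ht => by rw [Real.dist_eq]; exact (hN t ht).2⟩


section construct
variable {lo hi : ℝ}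

/-- clamp to [lo, hi] -/
noncomputable def cln (lo hi x : ℝ) : ℝ := max lo (min x hi)

lemma cln_mem (h : lo ≤ hi) (x : ℝ) : cln lo hi x ∈ Icc lo hi :=
  ⟨le_max_left _ _, max_le h (min_le_right _ _)⟩

lemma cln_eq {x : ℝ} (hx : x ∈ Icc lo hi) : cln lo hi x = x := by
  unfold cln
  rw [min_eq_left hx.2, max_eq_right hx.1]

lemma cln_lip (a b : ℝ) : |cln lo hi a - cln lo hi b| ≤ |a - b| := by
  unfold cln
  calc |max lo (min a hi) - max lo (min b hi)|
      = |max (min a hi) lo - max (min b hi) lo| := by rw [max_comm lo, max_comm lo]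
    _ ≤ |min a hi - min b hi| := abs_max_sub_max_le_abs _ _ _
    _ ≤ max |a - b| |hi - hi| := abs_min_sub_min_le_max _ _ _ _
    _ ≤ |a - b| := by simp

end construct

noncomputable def wfield (lo hi : ℝ) (p : ℝ × ℝ) : ℝ × ℝ :=
  (-(cln lo hi p.1 * (2 * cln lo hi p.1 - cln lo hi p.2 - 2)),
   -(cln lo hi p.2 * (-cln lo hi p.1 + 2 * cln lo hi p.2 - 2)))

lemma wfield_lip {lo hi : ℝ} (hlo : 0 ≤ lo) (hhi : lo ≤ hi) (hhi0 : 0 ≤ hi) :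
    LipschitzWith (⟨8 * hi + 2, by positivity⟩ : NNReal) (wfield lo hi) := by
  apply LipschitzWith.of_dist_le_mul
  intro p q
  set a := cln lo hi p.1
  set b := cln lo hi p.2
  set a' := cln lo hi q.1
  set b' := cln lo hi q.2
  have ha : a ∈ Icc lo hi := cln_mem hhi _
  have hb : b ∈ Icc lo hi := cln_mem hhi _
  have ha' : a' ∈ Icc lo hi := cln_mem hhi _
  have hb' : b' ∈ Icc lo hi := cln_mem hhi _
  have hda : |a - a'| ≤ dist p q := by
    calc |a - a'| ≤ |p.1 - q.1| := cln_lip _ _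
      _ = dist p.1 q.1 := (Real.dist_eq _ _).symm
      _ ≤ dist p q := by rw [Prod.dist_eq]; exact le_max_left _ _
  have hdb : |b - b'| ≤ dist p q := by
    calc |b - b'| ≤ |p.2 - q.2| := cln_lip _ _
      _ = dist p.2 q.2 := (Real.dist_eq _ _).symm
      _ ≤ dist p q := by rw [Prod.dist_eq]; exact le_max_right _ _
  have hd0 : 0 ≤ dist p q := dist_nonneg
  rw [Prod.dist_eq]
  show _ ≤ (8 * hi + 2) * dist p q
  apply max_le
  · rw [Real.dist_eq]
    rw [abs_le] at hda hdb ⊢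
    obtain ⟨ha1, ha2⟩ := ha
    obtain ⟨hb1, hb2⟩ := hb
    obtain ⟨ha1', ha2'⟩ := ha'
    obtain ⟨hb1', hb2'⟩ := hb'
    constructor <;> [skip; skip] <;>
      · simp only [wfield]
        nlinarith [mul_le_mul_of_nonneg_left hda.2 (show (0:ℝ) ≤ a + a' by linarith),
          mul_le_mul_of_nonneg_left hda.1 (show (0:ℝ) ≤ a + a' by linarith),
          mul_le_mul_of_nonneg_left hdb.2 (show (0:ℝ) ≤ a by linarith),
          mul_le_mul_of_nonneg_left hdb.1 (show (0:ℝ) ≤ a by linarith),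
          mul_le_mul_of_nonneg_left hda.2 (show (0:ℝ) ≤ b' by linarith),
          mul_le_mul_of_nonneg_left hda.1 (show (0:ℝ) ≤ b' by linarith)]
  · rw [Real.dist_eq]
    rw [abs_le] at hda hdb ⊢
    obtain ⟨ha1, ha2⟩ := ha
    obtain ⟨hb1, hb2⟩ := hb
    obtain ⟨ha1', ha2'⟩ := ha'
    obtain ⟨hb1', hb2'⟩ := hb'
    constructor <;>
      · simp only [wfield]
        nlinarith [mul_le_mul_of_nonneg_left hdb.2 (show (0:ℝ) ≤ b + b' by linarith),
          mul_le_mul_of_nonneg_left hdb.1 (show (0:ℝ) ≤ b + b' by linarith),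
          mul_le_mul_of_nonneg_left hda.2 (show (0:ℝ) ≤ b by linarith),
          mul_le_mul_of_nonneg_left hda.1 (show (0:ℝ) ≤ b by linarith),
          mul_le_mul_of_nonneg_left hdb.2 (show (0:ℝ) ≤ a' by linarith),
          mul_le_mul_of_nonneg_left hdb.1 (show (0:ℝ) ≤ a' by linarith)]

lemma wfield_bound {lo hi : ℝ} (hlo : 0 ≤ lo) (hhi : lo ≤ hi) (p : ℝ × ℝ) :
    ‖wfield lo hi p‖ ≤ hi * (3 * hi + 2) := by
  have hhi0 : 0 ≤ hi := le_trans hlo hhi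
  have ha := cln_mem hhi p.1
  have hb := cln_mem hhi p.2
  set a := cln lo hi p.1
  set b := cln lo hi p.2
  obtain ⟨ha1, ha2⟩ := ha
  obtain ⟨hb1, hb2⟩ := hb
  rw [Prod.norm_def]
  apply max_le <;>
    · rw [Real.norm_eq_abs, abs_le]
      constructor <;> simp only [wfield] <;> nlinarith

lemma global_solution {lo hi : ℝ} (hlo : 0 ≤ lo) (hhi : lo ≤ hi) (x₀ : ℝ × ℝ) :
    ∃ s : ℝ → ℝ × ℝ, s 0 = x₀ ∧
      ∀ t ∈ Ici (0:ℝ), HasDerivWithinAt s (wfield lo hi (s t)) (Ici 0) t := by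
  have hhi0 : 0 ≤ hi := le_trans hlo hhi
  set C : ℝ := hi * (3 * hi + 2) with hC
  have hC0 : 0 ≤ C := by positivity
  set K : NNReal := ⟨8 * hi + 2, by positivity⟩ with hK
  have hexist : ∀ n : ℕ, ∃ F : ℝ → ℝ × ℝ, F 0 = x₀ ∧
      ∀ t ∈ Icc (0:ℝ) (n:ℝ), HasDerivWithinAt F (wfield lo hi (F t)) (Icc 0 (n:ℝ)) t := by
    intro n
    have hpl : IsPicardLindelof (fun _ p => wfield lo hi p) (tmin := 0) (tmax := (n:ℝ))
        ⟨0, le_refl 0, Nat.cast_nonneg n⟩ x₀ ⟨C * n + 1, by positivity⟩ 0 ⟨C, hC0⟩ K :=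
      { lipschitzOnWith := fun t _ => (wfield_lip hlo hhi hhi0).lipschitzOnWith
        continuousOn := fun x _ => continuousOn_const
        norm_le := fun t _ x _ => wfield_bound hlo hhi x
        mul_max_le := by
          have : max ((n:ℝ) - 0) (0 - 0) = (n:ℝ) := by
            simp [Nat.cast_nonneg n]
          simp only [NNReal.coe_mk, NNReal.coe_zero, sub_zero] at this ⊢
          rw [this]
          show C * (n:ℝ) ≤ C * n + 1
          nlinarith [Nat.cast_nonneg (α := ℝ) n] }
    exact hpl.exists_eq_forall_mem_Icc_hasDerivWithinAt₀
  choose sol hsol0 hsolder using hexist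
  -- translate derivatives to the `Ici t` form needed by uniqueness
  have hsolder' : ∀ (n : ℕ), ∀ t ∈ Ico (0:ℝ) (n:ℝ),
      HasDerivWithinAt (sol n) (wfield lo hi (sol n t)) (Ici t) t := by
    intro n t ht
    exact (hsolder n t ⟨ht.1, ht.2.le⟩).mono_of_mem_nhdsWithin (Icc_mem_nhdsGE_of_mem ⟨ht.1, ht.2⟩)
  have hsolcont : ∀ (n : ℕ), ContinuousOn (sol n) (Icc (0:ℝ) (n:ℝ)) :=
    fun n t ht => (hsolder n t ht).continuousWithinAt
  have hagree : ∀ (m n : ℕ) (t : ℝ), t ∈ Icc (0:ℝ) (min (m:ℝ) (n:ℝ)) → sol m t = sol n t := by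
    intro m n t ht
    have hmn1 : Icc (0:ℝ) (min (m:ℝ) (n:ℝ)) ⊆ Icc 0 (m:ℝ) :=
      Icc_subset_Icc le_rfl (min_le_left _ _)
    have hmn2 : Icc (0:ℝ) (min (m:ℝ) (n:ℝ)) ⊆ Icc 0 (n:ℝ) :=
      Icc_subset_Icc le_rfl (min_le_right _ _)
    refine ODE_solution_unique (v := fun _ p => wfield lo hi p) (K := K)
      (fun _ => wfield_lip hlo hhi hhi0)
      ((hsolcont m).mono hmn1)
      (fun u hu => hsolder' m u ⟨hu.1, lt_of_lt_of_le hu.2 (min_le_left _ _)⟩)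
      ((hsolcont n).mono hmn2)
      (fun u hu => hsolder' n u ⟨hu.1, lt_of_lt_of_le hu.2 (min_le_right _ _)⟩)
      ((hsol0 m).trans (hsol0 n).symm) ht
  set s : ℝ → ℝ × ℝ := fun t => sol (⌊t⌋₊ + 1) t with hs
  have hs_eq : ∀ (n : ℕ), ∀ t ∈ Icc (0:ℝ) (n:ℝ), s t = sol n t := by
    intro n t ht
    apply hagree (⌊t⌋₊ + 1) n t
    refine ⟨ht.1, le_min ?_ ht.2⟩
    push_cast
    exact (Nat.lt_floor_add_one t).le
  refine ⟨s, ?_, ?_⟩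
  · have h0 : (0:ℝ) ∈ Icc (0:ℝ) ((1:ℕ):ℝ) := by norm_num
    rw [hs_eq 1 0 h0, hsol0 1]
  · intro t ht
    set n : ℕ := ⌊t⌋₊ + 1 with hn
    have htn : t < (n:ℝ) := by
      rw [hn]; push_cast; exact Nat.lt_floor_add_one t
    have htmem : t ∈ Icc (0:ℝ) (n:ℝ) := ⟨ht, htn.le⟩
    have h1 := hsolder n t htmem
    have h2 : HasDerivWithinAt s (wfield lo hi (s t)) (Icc 0 (n:ℝ)) t := by
      have := h1.congr (fun u hu => (hs_eq n u hu)) (hs_eq n t htmem)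
      rwa [hs_eq n t htmem]
    apply h2.mono_of_mem_nhdsWithin
    have hmem : Ici (0:ℝ) ∩ Iio (n:ℝ) ∈ nhdsWithin t (Ici 0) :=
      inter_mem_nhdsWithin _ (Iio_mem_nhds htn)
    exact mem_of_superset hmem (fun u hu => ⟨hu.1, hu.2.le⟩)

lemma hasDeriv_fst {s : ℝ → ℝ × ℝ} {d : ℝ × ℝ} {S : Set ℝ} {t : ℝ}
    (h : HasDerivWithinAt s d S t) : HasDerivWithinAt (fun u => (s u).1) d.1 S t := by
  have := (ContinuousLinearMap.fst ℝ ℝ ℝ).hasFDerivAt.comp_hasDerivWithinAt t h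
  exact this

lemma hasDeriv_snd {s : ℝ → ℝ × ℝ} {d : ℝ × ℝ} {S : Set ℝ} {t : ℝ}
    (h : HasDerivWithinAt s d S t) : HasDerivWithinAt (fun u => (s u).2) d.2 S t := by
  have := (ContinuousLinearMap.snd ℝ ℝ ℝ).hasFDerivAt.comp_hasDerivWithinAt t h
  exact this

lemma stay {lo hi x₁ x₂ : ℝ} (hlo : 0 < lo) (hx₁ : 0 < x₁) (hx₂ : 0 < x₂)
    (hαlo : lo < Real.exp (-((phi x₁ + phi x₂ - (2 - 2*Real.log 2))/2)))
    (hβhi : (2 + Real.sqrt (4 + (phi x₁ + phi x₂ - (2 - 2*Real.log 2))))^2 < hi)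
    {s : ℝ → ℝ × ℝ} (hs0 : s 0 = (x₁, x₂))
    (hder : ∀ t ∈ Ici (0:ℝ), HasDerivWithinAt s (wfield lo hi (s t)) (Ici 0) t) :
    ∀ t ∈ Ici (0:ℝ), (s t).1 ∈ Ioo lo hi ∧ (s t).2 ∈ Ioo lo hi := by
  set c : ℝ := phi x₁ + phi x₂ - (2 - 2*Real.log 2) with hcdef
  set α : ℝ := Real.exp (-(c/2)) with hα
  set β : ℝ := (2 + Real.sqrt (4 + c))^2 with hβ
  have hc0 : 0 ≤ c := by
    have h1 := phi_ge hx₁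
    have h2 := phi_ge hx₂
    have hlog2 : Real.log 2 < 1 := by
      have := Real.log_lt_sub_one_of_pos (show (0:ℝ) < 2 by norm_num) (by norm_num)
      linarith
    rw [hcdef]; linarith
  have hx₁m : x₁ ∈ Icc α β := by
    refine phi_bounds hx₁ hc0 ?_
    have := phi_ge hx₂
    rw [hcdef]; linarith
  have hx₂m : x₂ ∈ Icc α β := by
    refine phi_bounds hx₂ hc0 ?_
    have := phi_ge hx₁
    rw [hcdef]; linarith
  have hαβ : α ≤ β := le_trans hx₁m.1 hx₁m.2
  have hhi : lo ≤ hi := le_trans hαlo.le (le_trans hαβ hβhi.le)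
  have hsubOO : Icc α β ⊆ Ioo lo hi := fun x hx => ⟨lt_of_lt_of_le hαlo hx.1,
    lt_of_le_of_lt hx.2 hβhi⟩
  intro T hT
  -- suffices to show the trajectory stays in the open box on `Icc 0 T`
  suffices h : ∀ u ∈ Icc (0:ℝ) T, (s u).1 ∈ Ioo lo hi ∧ (s u).2 ∈ Ioo lo hi by
    exact h T ⟨hT, le_refl T⟩
  by_contra hex
  push_neg at hex
  set OO : Set (ℝ × ℝ) := Ioo lo hi ×ˢ Ioo lo hi with hOO
  set Cset : Set ℝ := Icc 0 T ∩ s ⁻¹' OOᶜ with hCset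
  have hscont : ContinuousOn s (Icc 0 T) := fun u hu =>
    ((hder u hu.1).mono (fun v hv => hv.1)).continuousWithinAt
  have hCclosed : IsClosed Cset :=
    hscont.preimage_isClosed_of_isClosed isClosed_Icc (isOpen_Ioo.prod isOpen_Ioo).isClosed_compl
  have hCne : Cset.Nonempty := by
    obtain ⟨u, hu, hnot⟩ := hex
    refine ⟨u, hu, ?_⟩
    simp only [mem_preimage, mem_compl_iff, hOO, mem_prod]
    tauto
  have hCbdd : BddBelow Cset := ⟨0, fun u hu => hu.1.1⟩
  set E : ℝ := sInf Cset with hE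
  have hEC : E ∈ Cset := hCclosed.csInf_mem hCne hCbdd
  have hE0 : 0 ≤ E := hEC.1.1
  have hET : E ≤ T := hEC.1.2
  have h0notC : (0:ℝ) ∉ Cset := by
    intro h0
    apply h0.2
    simp only [mem_preimage, hs0, hOO, mem_prod]
    exact ⟨hsubOO hx₁m, hsubOO hx₂m⟩
  have hEpos : 0 < E := lt_of_le_of_ne hE0 (fun h => h0notC (h ▸ hEC))
  have hbefore : ∀ u, 0 ≤ u → u < E → s u ∈ OO := by
    intro u hu0 huE
    by_contra hnot
    have huC : u ∈ Cset := ⟨⟨hu0, le_trans huE.le hET⟩, hnot⟩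
    exact absurd (csInf_le hCbdd huC) (not_le.mpr huE)
  -- on `Icc 0 E` the trajectory is in the closed box
  have hclosedbox : ∀ u ∈ Icc (0:ℝ) E, s u ∈ Icc lo hi ×ˢ Icc lo hi := by
    have hDclosed : IsClosed (Icc (0:ℝ) E ∩ s ⁻¹' (Icc lo hi ×ˢ Icc lo hi)) :=
      (hscont.mono (Icc_subset_Icc le_rfl hET)).preimage_isClosed_of_isClosed
        isClosed_Icc (isClosed_Icc.prod isClosed_Icc)
    have hIco : Ico (0:ℝ) E ⊆ Icc (0:ℝ) E ∩ s ⁻¹' (Icc lo hi ×ˢ Icc lo hi) := by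
      intro u hu
      refine ⟨⟨hu.1, hu.2.le⟩, ?_⟩
      have := hbefore u hu.1 hu.2
      simp only [mem_preimage, hOO, mem_prod] at this ⊢
      exact ⟨Ioo_subset_Icc_self this.1, Ioo_subset_Icc_self this.2⟩
    intro u hu
    have h' : u ∈ closure (Ico (0:ℝ) E) := by
      rw [closure_Ico (ne_of_lt hEpos)]; exact hu
    exact ((hDclosed.closure_subset_iff.mpr hIco) h').2
  -- components solve the true ODE on `Icc 0 E`
  set f₁ : ℝ → ℝ := fun u => (s u).1 with hf₁
  set g₁ : ℝ → ℝ := fun u => (s u).2 with hg₁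
  have hcln1 : ∀ u ∈ Icc (0:ℝ) E, cln lo hi (f₁ u) = f₁ u :=
    fun u hu => cln_eq (hclosedbox u hu).1
  have hcln2 : ∀ u ∈ Icc (0:ℝ) E, cln lo hi (g₁ u) = g₁ u :=
    fun u hu => cln_eq (hclosedbox u hu).2
  have hf₁der : ∀ u ∈ Icc (0:ℝ) E,
      HasDerivWithinAt f₁ (-(f₁ u * (2 * f₁ u - g₁ u - 2))) (Icc 0 E) u := by
    intro u hu
    have hd := (hder u hu.1).mono (Icc_subset_Ici_self : Icc (0:ℝ) E ⊆ Ici 0)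
    have := hasDeriv_fst hd
    simp only [wfield] at this
    rwa [hcln1 u hu, hcln2 u hu] at this
  have hg₁der : ∀ u ∈ Icc (0:ℝ) E,
      HasDerivWithinAt g₁ (-(g₁ u * (-f₁ u + 2 * g₁ u - 2))) (Icc 0 E) u := by
    intro u hu
    have hd := (hder u hu.1).mono (Icc_subset_Ici_self : Icc (0:ℝ) E ⊆ Ici 0)
    have := hasDeriv_snd hd
    simp only [wfield] at this
    rwa [hcln1 u hu, hcln2 u hu] at this
  have hf₁pos : ∀ u ∈ Icc (0:ℝ) E, 0 < f₁ u :=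
    fun u hu => lt_of_lt_of_le hlo (hclosedbox u hu).1.1
  have hg₁pos : ∀ u ∈ Icc (0:ℝ) E, 0 < g₁ u :=
    fun u hu => lt_of_lt_of_le hlo (hclosedbox u hu).2.1
  have hQ0 : ∀ u ∈ Icc (0:ℝ) E,
      (0:ℝ) ≤ 2*(f₁ u - 2)^2 - 2*(f₁ u - 2)*(g₁ u - 2) + 2*(g₁ u - 2)^2 := by
    intro u hu
    nlinarith [sq_nonneg (f₁ u - g₁ u), sq_nonneg (f₁ u - 2), sq_nonneg (g₁ u - 2)]
  have hlyap := lyap (δ := 0) hf₁der hg₁der hf₁pos hg₁pos hQ0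
  have hmono := hlyap (a := 0) (b := E) ⟨le_rfl, hE0⟩ ⟨hE0, le_rfl⟩ hE0
  simp only [mul_zero, add_zero, mul_comm, zero_mul, MulZeroClass.mul_zero] at hmono
  have hV0 : f₁ 0 = x₁ ∧ g₁ 0 = x₂ := by
    constructor <;> simp [hf₁, hg₁, hs0]
  have hVE : phi (f₁ E) + phi (g₁ E) ≤ phi x₁ + phi x₂ := by
    have := hmono
    rw [hV0.1, hV0.2] at this
    linarith
  have hfE : phi (f₁ E) ≤ c := by
    have := phi_ge (hg₁pos E ⟨hE0, le_rfl⟩)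
    rw [hcdef]; linarith
  have hgE : phi (g₁ E) ≤ c := by
    have := phi_ge (hf₁pos E ⟨hE0, le_rfl⟩)
    rw [hcdef]; linarith
  have hfEm := phi_bounds (hf₁pos E ⟨hE0, le_rfl⟩) hc0 hfE
  have hgEm := phi_bounds (hg₁pos E ⟨hE0, le_rfl⟩) hc0 hgE
  apply hEC.2
  simp only [mem_preimage, mem_compl_iff, hOO, mem_prod, not_not]
  exact ⟨hsubOO ⟨hfEm.1, hfEm.2⟩, hsubOO ⟨hgEm.1, hgEm.2⟩⟩


/-- Consider the planar system
`s₁' = -s₁ (2s₁ - s₂ - 2)`, `s₂' = -s₂ (-s₁ + 2s₂ - 2)` on the open quadrant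
`(0,∞)²`.  For every initial condition in `(0,∞)²` the maximal solution is
defined for all `t ≥ 0`, remains in `(0,∞)²`, and converges to the
equilibrium `(2, 2)` as `t → ∞`: there exists a global solution with these
properties, and every solution defined for all `t ≥ 0` has them. -/
theorem stmt16
    (x₁ x₂ : ℝ) (hx₁ : 0 < x₁) (hx₂ : 0 < x₂) :
    (∃ s₁ s₂ : ℝ → ℝ, s₁ 0 = x₁ ∧ s₂ 0 = x₂ ∧
      (∀ t ∈ Set.Ici (0:ℝ),
        HasDerivWithinAt s₁ (-(s₁ t * (2 * s₁ t - s₂ t - 2))) (Set.Ici 0) t ∧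
        HasDerivWithinAt s₂ (-(s₂ t * (-s₁ t + 2 * s₂ t - 2))) (Set.Ici 0) t) ∧
      (∀ t ∈ Set.Ici (0:ℝ), 0 < s₁ t ∧ 0 < s₂ t) ∧
      Filter.Tendsto s₁ Filter.atTop (nhds 2) ∧
      Filter.Tendsto s₂ Filter.atTop (nhds 2))
    ∧ ∀ s₁ s₂ : ℝ → ℝ, s₁ 0 = x₁ → s₂ 0 = x₂ →
      (∀ t ∈ Set.Ici (0:ℝ),
        HasDerivWithinAt s₁ (-(s₁ t * (2 * s₁ t - s₂ t - 2))) (Set.Ici 0) t ∧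
        HasDerivWithinAt s₂ (-(s₂ t * (-s₁ t + 2 * s₂ t - 2))) (Set.Ici 0) t) →
      ((∀ t ∈ Set.Ici (0:ℝ), 0 < s₁ t ∧ 0 < s₂ t) ∧
        Filter.Tendsto s₁ Filter.atTop (nhds 2) ∧
        Filter.Tendsto s₂ Filter.atTop (nhds 2)) := by
  constructor
  · -- existence
    set c : ℝ := phi x₁ + phi x₂ - (2 - 2*Real.log 2) with hcdef
    set α : ℝ := Real.exp (-(c/2)) with hα
    set β : ℝ := (2 + Real.sqrt (4 + c))^2 with hβ
    set lo : ℝ := α/2 with hlodef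
    set hi : ℝ := β + 1 with hhidef
    have hαpos : 0 < α := Real.exp_pos _
    have hlo : 0 < lo := by rw [hlodef]; positivity
    have hc0 : 0 ≤ c := by
      have h1 := phi_ge hx₁
      have h2 := phi_ge hx₂
      have hlog2 : Real.log 2 < 1 := by
        have := Real.log_lt_sub_one_of_pos (show (0:ℝ) < 2 by norm_num) (by norm_num)
        linarith
      rw [hcdef]; linarith
    have hx₁m : x₁ ∈ Set.Icc α β := by
      refine phi_bounds hx₁ hc0 ?_
      have := phi_ge hx₂
      rw [hcdef]; linarith
    have hαβ : α ≤ β := le_trans hx₁m.1 hx₁m.2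
    have hhi : lo ≤ hi := by rw [hlodef, hhidef]; linarith
    obtain ⟨s, hs0, hsder⟩ := global_solution hlo.le hhi (x₁, x₂)
    have hαlo : lo < α := by rw [hlodef]; linarith
    have hβhi : β < hi := by rw [hhidef]; linarith
    have hstay := stay hlo hx₁ hx₂ hαlo hβhi hs0 hsder
    set s₁ : ℝ → ℝ := fun t => (s t).1 with hs₁
    set s₂ : ℝ → ℝ := fun t => (s t).2 with hs₂
    have hbox : ∀ t ∈ Set.Ici (0:ℝ), s₁ t ∈ Set.Icc lo hi ∧ s₂ t ∈ Set.Icc lo hi := by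
      intro t ht
      exact ⟨Set.Ioo_subset_Icc_self (hstay t ht).1, Set.Ioo_subset_Icc_self (hstay t ht).2⟩
    have hders : ∀ t ∈ Set.Ici (0:ℝ),
        HasDerivWithinAt s₁ (-(s₁ t * (2 * s₁ t - s₂ t - 2))) (Set.Ici 0) t ∧
        HasDerivWithinAt s₂ (-(s₂ t * (-s₁ t + 2 * s₂ t - 2))) (Set.Ici 0) t := by
      intro t ht
      have h1 := hasDeriv_fst (hsder t ht)
      have h2 := hasDeriv_snd (hsder t ht)
      simp only [wfield] at h1 h2
      rw [cln_eq (hbox t ht).1, cln_eq (hbox t ht).2] at h1 h2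
      exact ⟨h1, h2⟩
    have h10 : s₁ 0 = x₁ := by rw [hs₁]; simp [hs0]
    have h20 : s₂ 0 = x₂ := by rw [hs₂]; simp [hs0]
    have hkey := key (f := s₁) (g := s₂) (by rw [h10]; exact hx₁) (by rw [h20]; exact hx₂) hders
    exact ⟨s₁, s₂, h10, h20, hders, hkey.1, hkey.2.1, hkey.2.2⟩
  · -- uniqueness of behaviour
    intro s₁ s₂ h10 h20 hders
    have hkey := key (f := s₁) (g := s₂) (by rw [h10]; exact hx₁) (by rw [h20]; exact hx₂) hders
    exact ⟨hkey.1, hkey.2.1, hkey.2.2⟩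
end

section
/- Consider the planar system s_1′ = −s_1(3s_1 − 3), s_2′ = −s_2(2s_1 + s_2 − 1) on the open quadrant (0,∞)². For every initial condition s(0) ∈ (0,∞)², the maximal solution is defined for all t ≥ 0, remains in (0,∞)², and converges to the boundary equilibrium point (1, 0) as t → ∞. -/
open Real Set Filter Topology

noncomputable section
namespace Stmt17

variable (x₁ x₂ : ℝ)

def Dd (t : ℝ) : ℝ := x₁ * Real.exp (3*t) + 1 - x₁
def S1 (t : ℝ) : ℝ := x₁ * Real.exp (3*t) / Dd x₁ t
def psi (t : ℝ) : ℝ := Real.exp t * (Dd x₁ t) ^ (-(2/3) : ℝ)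
def phi (t : ℝ) : ℝ := Real.exp (-t) * (Dd x₁ t) ^ ((2/3) : ℝ)
def Uf (t : ℝ) : ℝ := phi x₁ t * (x₂⁻¹ + ∫ r in (0:ℝ)..t, psi x₁ r)
def S2 (t : ℝ) : ℝ := (Uf x₁ x₂ t)⁻¹

variable {x₁ x₂ : ℝ}

lemma Dd_ge_one (hx₁ : 0 < x₁) {t : ℝ} (ht : 0 ≤ t) : 1 ≤ Dd x₁ t := by
  have h1 : 1 ≤ Real.exp (3*t) := Real.one_le_exp (by linarith)
  have := mul_le_mul_of_nonneg_left h1 hx₁.le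
  simp only [Dd]; nlinarith

lemma Dd_pos (hx₁ : 0 < x₁) {t : ℝ} (ht : 0 ≤ t) : 0 < Dd x₁ t := lt_of_lt_of_le one_pos (Dd_ge_one hx₁ ht)

lemma hasDerivAt_Dd (t : ℝ) : HasDerivAt (Dd x₁) (3 * (x₁ * Real.exp (3*t))) t := by
  have h : HasDerivAt (fun t : ℝ => Real.exp (3*t)) (Real.exp (3*t) * 3) t := by
    simpa [Function.comp_def] using (Real.hasDerivAt_exp (3*t)).comp t ((hasDerivAt_id t).const_mul 3)
  have := ((h.const_mul x₁).add_const 1).sub_const x₁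
  exact this.congr_deriv (by ring)

lemma S1_zero : S1 x₁ 0 = x₁ := by simp [S1, Dd]

lemma S1_pos (hx₁ : 0 < x₁) {t : ℝ} (ht : 0 ≤ t) : 0 < S1 x₁ t :=
  div_pos (by positivity) (Dd_pos hx₁ ht)

lemma hasDerivAt_S1 (hx₁ : 0 < x₁) {t : ℝ} (ht : 0 ≤ t) :
    HasDerivAt (S1 x₁) (-(S1 x₁ t * (3 * S1 x₁ t - 3))) t := by
  have hD := Dd_pos hx₁ ht
  have hE : HasDerivAt (fun t : ℝ => x₁ * Real.exp (3*t)) (3 * (x₁ * Real.exp (3*t))) t := by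
    have h : HasDerivAt (fun t : ℝ => Real.exp (3*t)) (Real.exp (3*t) * 3) t := by
      simpa [Function.comp_def] using (Real.hasDerivAt_exp (3*t)).comp t ((hasDerivAt_id t).const_mul 3)
    simpa using (h.const_mul x₁).congr_deriv (by ring)
  have h := hE.div (hasDerivAt_Dd (x₁ := x₁) t) hD.ne'
  refine h.congr_deriv ?_
  have hDne := hD.ne'
  simp only [S1]
  generalize Dd x₁ t = D at hDne ⊢
  field_simp
  ring

lemma phi_pos (hx₁ : 0 < x₁) {t : ℝ} (ht : 0 ≤ t) : 0 < phi x₁ t := by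
  have := Dd_pos hx₁ ht
  exact mul_pos (Real.exp_pos _) (Real.rpow_pos_of_pos this _)

lemma psi_pos (hx₁ : 0 < x₁) {t : ℝ} (ht : 0 ≤ t) : 0 < psi x₁ t := by
  have := Dd_pos hx₁ ht
  exact mul_pos (Real.exp_pos _) (Real.rpow_pos_of_pos this _)

lemma phi_mul_psi (hx₁ : 0 < x₁) {t : ℝ} (ht : 0 ≤ t) : phi x₁ t * psi x₁ t = 1 := by
  have hD := Dd_pos hx₁ ht
  simp only [phi, psi]
  rw [Real.rpow_neg hD.le]
  have h1 : Real.exp (-t) * Real.exp t = 1 := by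
    rw [← Real.exp_add]; simp
  have h2 : (Dd x₁ t ^ ((2/3):ℝ)) * (Dd x₁ t ^ ((2/3):ℝ))⁻¹ = 1 :=
    mul_inv_cancel₀ (Real.rpow_pos_of_pos hD _).ne'
  calc Real.exp (-t) * Dd x₁ t ^ ((2/3):ℝ) * (Real.exp t * (Dd x₁ t ^ ((2/3):ℝ))⁻¹)
      = (Real.exp (-t) * Real.exp t) * ((Dd x₁ t ^ ((2/3):ℝ)) * (Dd x₁ t ^ ((2/3):ℝ))⁻¹) := by ring
    _ = 1 := by rw [h1, h2, mul_one]

lemma hasDerivAt_phi (hx₁ : 0 < x₁) {t : ℝ} (ht : 0 ≤ t) :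
    HasDerivAt (phi x₁) ((2 * S1 x₁ t - 1) * phi x₁ t) t := by
  have hD := Dd_pos hx₁ ht
  have hexp : HasDerivAt (fun t : ℝ => Real.exp (-t)) (-Real.exp (-t)) t := by
    simpa [Function.comp_def] using (Real.hasDerivAt_exp (-t)).comp t (hasDerivAt_neg t)
  have hrpow : HasDerivAt (fun t : ℝ => (Dd x₁ t) ^ ((2/3):ℝ))
      (3 * (x₁ * Real.exp (3*t)) * (2/3) * Dd x₁ t ^ ((2/3:ℝ) - 1)) t :=
    (hasDerivAt_Dd t).rpow_const (Or.inl hD.ne')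
  have h := hexp.mul hrpow
  refine h.congr_deriv ?_
  have hsub : Dd x₁ t ^ ((2/3:ℝ) - 1) = Dd x₁ t ^ ((2/3):ℝ) / Dd x₁ t := by
    rw [Real.rpow_sub hD, Real.rpow_one]
  rw [hsub]
  simp only [S1, phi]
  generalize hDg : Dd x₁ t = D at *
  have hDne : D ≠ 0 := hD.ne'
  field_simp
  ring

lemma continuous_Dd : Continuous (Dd x₁) := by
  unfold Dd; continuity

lemma isOpen_V : IsOpen {t : ℝ | 0 < Dd x₁ t} :=
  isOpen_lt continuous_const (continuous_Dd)

lemma continuousAt_psi (hD : 0 < Dd x₁ t) : ContinuousAt (psi x₁) t := by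
  unfold psi
  exact (Real.continuous_exp.continuousAt).mul
    ((continuous_Dd.continuousAt).rpow_const (Or.inl hD.ne'))

lemma intervalIntegrable_psi (hx₁ : 0 < x₁) {t : ℝ} (ht : 0 ≤ t) :
    IntervalIntegrable (psi x₁) MeasureTheory.volume 0 t := by
  apply ContinuousOn.intervalIntegrable
  intro r hr
  rw [Set.uIcc_of_le ht] at hr
  exact (continuousAt_psi (Dd_pos hx₁ hr.1)).continuousWithinAt

lemma hasDerivAt_integral_psi (hx₁ : 0 < x₁) {t : ℝ} (ht : 0 ≤ t) :
    HasDerivAt (fun u => ∫ r in (0:ℝ)..u, psi x₁ r) (psi x₁ t) t := by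
  have hD := Dd_pos hx₁ ht
  refine intervalIntegral.integral_hasDerivAt_right (intervalIntegrable_psi hx₁ ht) ?_
    (continuousAt_psi hD)
  refine ContinuousOn.stronglyMeasurableAtFilter isOpen_V ?_ t hD
  exact fun r hr => (continuousAt_psi hr).continuousWithinAt

lemma integral_psi_nonneg (hx₁ : 0 < x₁) {t : ℝ} (ht : 0 ≤ t) :
    0 ≤ ∫ r in (0:ℝ)..t, psi x₁ r := by
  apply intervalIntegral.integral_nonneg ht
  intro r hr
  exact (psi_pos hx₁ hr.1).le

lemma Uf_pos (hx₁ : 0 < x₁) (hx₂ : 0 < x₂) {t : ℝ} (ht : 0 ≤ t) : 0 < Uf x₁ x₂ t := by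
  have h1 := phi_pos hx₁ ht
  have h2 := integral_psi_nonneg hx₁ ht
  have h3 : 0 < x₂⁻¹ := inv_pos.2 hx₂
  exact mul_pos h1 (by linarith)

lemma S2_pos (hx₁ : 0 < x₁) (hx₂ : 0 < x₂) {t : ℝ} (ht : 0 ≤ t) : 0 < S2 x₁ x₂ t :=
  inv_pos.2 (Uf_pos hx₁ hx₂ ht)

lemma hasDerivAt_Uf (hx₁ : 0 < x₁) {t : ℝ} (ht : 0 ≤ t) :
    HasDerivAt (Uf x₁ x₂) ((2 * S1 x₁ t - 1) * Uf x₁ x₂ t + 1) t := by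
  have h := (hasDerivAt_phi hx₁ ht).mul
    ((hasDerivAt_integral_psi hx₁ ht).const_add x₂⁻¹)
  refine h.congr_deriv ?_
  have := phi_mul_psi hx₁ ht
  simp only [Uf]
  nlinarith [this]

lemma Uf_zero : Uf x₁ x₂ 0 = x₂⁻¹ := by
  simp [Uf, phi, Dd]

lemma S2_zero : S2 x₁ x₂ 0 = x₂ := by
  simp [S2, Uf_zero]

lemma hasDerivAt_S2 (hx₁ : 0 < x₁) (hx₂ : 0 < x₂) {t : ℝ} (ht : 0 ≤ t) :
    HasDerivAt (S2 x₁ x₂) (-(S2 x₁ x₂ t * (2 * S1 x₁ t + S2 x₁ x₂ t - 1))) t := by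
  have hU := Uf_pos hx₁ hx₂ ht
  have h := (hasDerivAt_Uf (x₂ := x₂) hx₁ ht).inv hU.ne'
  refine h.congr_deriv ?_
  simp only [S2]
  generalize Uf x₁ x₂ t = U at hU ⊢
  have hUne : U ≠ 0 := hU.ne'
  field_simp
  ring

lemma tendsto_S1 (hx₁ : 0 < x₁) : Tendsto (S1 x₁) atTop (𝓝 1) := by
  have he : Tendsto (fun t : ℝ => Real.exp (-(3*t))) atTop (𝓝 0) :=
    Real.tendsto_exp_neg_atTop_nhds_zero.comp
      (Tendsto.const_mul_atTop (by norm_num : (0:ℝ) < 3) tendsto_id)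
  have hden : Tendsto (fun t => x₁ + (1 - x₁) * Real.exp (-(3*t))) atTop
      (𝓝 (x₁ + (1 - x₁) * 0)) :=
    (tendsto_const_nhds (x := x₁)).add (he.const_mul (1 - x₁))
  rw [mul_zero, add_zero] at hden
  have h : Tendsto (fun t => x₁ / (x₁ + (1 - x₁) * Real.exp (-(3*t)))) atTop (𝓝 (x₁ / x₁)) :=
    tendsto_const_nhds.div hden hx₁.ne'
  rw [div_self hx₁.ne'] at h
  refine h.congr' ?_
  filter_upwards [eventually_ge_atTop (0:ℝ)] with t ht
  have hD := Dd_pos hx₁ ht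
  have hE : Real.exp (-(3*t)) * Real.exp (3*t) = 1 := by rw [← Real.exp_add]; simp
  have hden2 : x₁ + (1 - x₁) * Real.exp (-(3*t)) = Real.exp (-(3*t)) * Dd x₁ t := by
    simp only [Dd]; nlinarith [hE]
  rw [hden2]
  show x₁ / (Real.exp (-(3*t)) * Dd x₁ t) = S1 x₁ t
  simp only [S1]
  rw [div_eq_div_iff (by positivity) hD.ne']
  linear_combination (-(x₁ * Dd x₁ t)) * hE

lemma tendsto_Uf (hx₁ : 0 < x₁) (hx₂ : 0 < x₂) : Tendsto (Uf x₁ x₂) atTop atTop := by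
  set c := (x₁/2) ^ ((2/3):ℝ) * x₂⁻¹ with hc_def
  have hc : 0 < c := mul_pos (Real.rpow_pos_of_pos (by positivity) _) (inv_pos.2 hx₂)
  have hbase : Tendsto (fun t : ℝ => c * Real.exp t) atTop atTop :=
    Tendsto.const_mul_atTop hc Real.tendsto_exp_atTop
  refine tendsto_atTop_mono' _ ?_ hbase
  have hev : ∀ᶠ t in atTop, 2 ≤ Real.exp (3*t) := by
    have h3 : Tendsto (fun t : ℝ => Real.exp (3*t)) atTop atTop :=
      Real.tendsto_exp_atTop.comp (Tendsto.const_mul_atTop (by norm_num : (0:ℝ) < 3) tendsto_id)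
    exact h3.eventually_ge_atTop 2
  filter_upwards [hev, eventually_ge_atTop (0:ℝ)] with t hE2 ht
  have hDlow : (x₁/2) * Real.exp (3*t) ≤ Dd x₁ t := by
    simp only [Dd]; nlinarith
  have h1 : ((x₁/2) * Real.exp (3*t)) ^ ((2/3):ℝ) ≤ Dd x₁ t ^ ((2/3):ℝ) :=
    Real.rpow_le_rpow (by positivity) hDlow (by norm_num)
  have h2 : ((x₁/2) * Real.exp (3*t)) ^ ((2/3):ℝ)
      = (x₁/2) ^ ((2/3):ℝ) * Real.exp (2*t) := by
    rw [Real.mul_rpow (by positivity) (by positivity), ← Real.exp_mul]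
    congr 1
    ring
  have hphil : (x₁/2) ^ ((2/3):ℝ) * Real.exp t ≤ phi x₁ t := by
    have h3 : Real.exp (-t) * ((x₁/2) ^ ((2/3):ℝ) * Real.exp (2*t))
        ≤ Real.exp (-t) * Dd x₁ t ^ ((2/3):ℝ) := by
      apply mul_le_mul_of_nonneg_left _ (Real.exp_pos _).le
      rw [← h2]; exact h1
    have h4 : Real.exp (-t) * Real.exp (2*t) = Real.exp t := by
      rw [← Real.exp_add]; congr 1; ring
    calc (x₁/2) ^ ((2/3):ℝ) * Real.exp t
        = Real.exp (-t) * ((x₁/2) ^ ((2/3):ℝ) * Real.exp (2*t)) := by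
          linear_combination ((x₁/2) ^ ((2/3):ℝ)) * h4.symm
      _ ≤ phi x₁ t := h3
  have hI := integral_psi_nonneg hx₁ ht
  have hphipos := phi_pos hx₁ ht
  have hx₂i : 0 < x₂⁻¹ := inv_pos.2 hx₂
  calc c * Real.exp t = ((x₁/2) ^ ((2/3):ℝ) * Real.exp t) * x₂⁻¹ := by rw [hc_def]; ring
    _ ≤ phi x₁ t * x₂⁻¹ := mul_le_mul_of_nonneg_right hphil hx₂i.le
    _ ≤ phi x₁ t * (x₂⁻¹ + ∫ r in (0:ℝ)..t, psi x₁ r) := by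
        apply mul_le_mul_of_nonneg_left _ hphipos.le
        linarith
    _ = Uf x₁ x₂ t := rfl

lemma tendsto_S2 (hx₁ : 0 < x₁) (hx₂ : 0 < x₂) : Tendsto (S2 x₁ x₂) atTop (𝓝 0) := by
  have := (tendsto_Uf hx₁ hx₂).inv_tendsto_atTop
  exact this

def vf (_t : ℝ) (p : ℝ × ℝ) : ℝ × ℝ :=
  (-(p.1 * (3 * p.1 - 3)), -(p.2 * (2 * p.1 + p.2 - 1)))

lemma lipschitz_vf {R : ℝ} (hR : 0 ≤ R) (t : ℝ) :
    LipschitzOnWith (⟨3 + 10 * R, by positivity⟩ : NNReal) (vf t) (Metric.closedBall 0 R) := by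
  refine LipschitzOnWith.of_dist_le_mul ?_
  intro p hp q hq
  obtain ⟨a, b⟩ := p
  obtain ⟨a', b'⟩ := q
  rw [Metric.mem_closedBall, dist_zero_right, Prod.norm_def] at hp hq
  simp only [sup_le_iff, Real.norm_eq_abs] at hp hq
  obtain ⟨ha, hb⟩ := hp
  obtain ⟨ha', hb'⟩ := hq
  have ha1 := abs_le.mp ha
  have hb1 := abs_le.mp hb
  have ha'1 := abs_le.mp ha'
  have hb'1 := abs_le.mp hb'
  rw [Prod.dist_eq, Prod.dist_eq, Real.dist_eq, Real.dist_eq, Real.dist_eq, Real.dist_eq]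
  set m := max |a - a'| |b - b'| with hm
  have hda : |a - a'| ≤ m := le_max_left _ _
  have hdb : |b - b'| ≤ m := le_max_right _ _
  have hm0 : 0 ≤ m := le_trans (abs_nonneg _) hda
  change _ ≤ (3 + 10 * R) * m
  simp only [vf]
  apply max_le
  · have e1 : -(a * (3 * a - 3)) - -(a' * (3 * a' - 3)) = (3 - 3 * (a + a')) * (a - a') := by
      ring
    rw [e1, abs_mul]
    have h1 : |3 - 3 * (a + a')| ≤ 3 + 6 * R := by
      rw [abs_le]; constructor <;> linarith [ha1.1, ha1.2, ha'1.1, ha'1.2]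
    calc |3 - 3 * (a + a')| * |a - a'| ≤ (3 + 6 * R) * m :=
          mul_le_mul h1 hda (abs_nonneg _) (by linarith)
      _ ≤ (3 + 10 * R) * m := by nlinarith
  · have e2 : -(b * (2 * a + b - 1)) - -(b' * (2 * a' + b' - 1))
        = (1 - 2 * a - (b + b')) * (b - b') + (-(2 * b')) * (a - a') := by ring
    rw [e2]
    have h2 : |1 - 2 * a - (b + b')| ≤ 1 + 4 * R := by
      rw [abs_le]; constructor <;> linarith [ha1.1, ha1.2, hb1.1, hb1.2, hb'1.1, hb'1.2]
    have h3 : |(-(2 * b'))| ≤ 2 * R := by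
      rw [abs_le]; constructor <;> linarith [hb'1.1, hb'1.2]
    calc |(1 - 2 * a - (b + b')) * (b - b') + (-(2 * b')) * (a - a')|
        ≤ |(1 - 2 * a - (b + b')) * (b - b')| + |(-(2 * b')) * (a - a')| := abs_add_le _ _
      _ = |1 - 2 * a - (b + b')| * |b - b'| + |(-(2 * b'))| * |a - a'| := by
          rw [abs_mul, abs_mul]
      _ ≤ (1 + 4 * R) * m + (2 * R) * m := by
          have := mul_le_mul h2 hdb (abs_nonneg _) (by linarith : (0:ℝ) ≤ 1 + 4 * R)
          have := mul_le_mul h3 hda (abs_nonneg _) (by linarith : (0:ℝ) ≤ 2 * R)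
          linarith
      _ ≤ (3 + 10 * R) * m := by nlinarith

lemma solution_eq (hx₁ : 0 < x₁) (hx₂ : 0 < x₂) (s₁ s₂ : ℝ → ℝ)
    (h0₁ : s₁ 0 = x₁) (h0₂ : s₂ 0 = x₂)
    (hode : ∀ t ∈ Set.Ici (0:ℝ),
      HasDerivWithinAt s₁ (-(s₁ t * (3 * s₁ t - 3))) (Set.Ici 0) t ∧
      HasDerivWithinAt s₂ (-(s₂ t * (2 * s₁ t + s₂ t - 1))) (Set.Ici 0) t) :
    ∀ t ∈ Set.Ici (0:ℝ), s₁ t = S1 x₁ t ∧ s₂ t = S2 x₁ x₂ t := by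
  intro T hT
  rw [Set.mem_Ici] at hT
  set f : ℝ → ℝ × ℝ := fun t => (s₁ t, s₂ t) with hf_def
  set g : ℝ → ℝ × ℝ := fun t => (S1 x₁ t, S2 x₁ x₂ t) with hg_def
  -- continuity
  have hfc : ContinuousOn f (Icc 0 T) := by
    intro t ht
    have h1 := ((hode t ht.1).1.continuousWithinAt).mono (Icc_subset_Ici_self : Icc (0:ℝ) T ⊆ Ici 0)
    have h2 := ((hode t ht.1).2.continuousWithinAt).mono (Icc_subset_Ici_self : Icc (0:ℝ) T ⊆ Ici 0)
    exact h1.prodMk h2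
  have hgc : ContinuousOn g (Icc 0 T) := by
    intro t ht
    have h1 : ContinuousWithinAt (S1 x₁) (Icc 0 T) t :=
      (hasDerivAt_S1 hx₁ ht.1).continuousAt.continuousWithinAt
    have h2 : ContinuousWithinAt (S2 x₁ x₂) (Icc 0 T) t :=
      (hasDerivAt_S2 hx₁ hx₂ ht.1).continuousAt.continuousWithinAt
    exact h1.prodMk h2
  -- bound
  obtain ⟨C₁, hC₁⟩ := isCompact_Icc.exists_bound_of_continuousOn hfc
  obtain ⟨C₂, hC₂⟩ := isCompact_Icc.exists_bound_of_continuousOn hgc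
  set R : ℝ := max (max C₁ C₂) 0 with hR_def
  have hR : 0 ≤ R := le_max_right _ _
  have key : EqOn f g (Icc 0 T) := by
    apply ODE_solution_unique_of_mem_Icc_right
      (v := vf) (s := fun _ => Metric.closedBall (0 : ℝ × ℝ) R)
      (K := ⟨3 + 10 * R, by positivity⟩)
      (fun t _ => lipschitz_vf hR t) hfc ?_ ?_ hgc ?_ ?_ ?_
    · intro t ht
      exact ((hode t ht.1).1.mono (Ici_subset_Ici.mpr ht.1)).prodMk
        ((hode t ht.1).2.mono (Ici_subset_Ici.mpr ht.1))
    · intro t ht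
      rw [Metric.mem_closedBall, dist_zero_right]
      exact le_trans (hC₁ t (Ico_subset_Icc_self ht)) (le_trans (le_max_left _ _) (le_max_left _ _))
    · intro t ht
      exact ((hasDerivAt_S1 hx₁ ht.1).hasDerivWithinAt).prodMk
        ((hasDerivAt_S2 hx₁ hx₂ ht.1).hasDerivWithinAt)
    · intro t ht
      rw [Metric.mem_closedBall, dist_zero_right]
      exact le_trans (hC₂ t (Ico_subset_Icc_self ht)) (le_trans (le_max_right _ _) (le_max_left _ _))
    · show f 0 = g 0
      simp only [hf_def, hg_def, h0₁, h0₂, S1_zero, S2_zero]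
  have hTT := key ⟨hT, le_refl T⟩
  simp only [hf_def, hg_def, Prod.mk.injEq] at hTT
  exact hTT

end Stmt17
end

/-- Consider the planar system
`s₁' = -s₁ (3s₁ - 3)`, `s₂' = -s₂ (2s₁ + s₂ - 1)` on the open quadrant
`(0,∞)²`.  For every initial condition in `(0,∞)²` the maximal solution is
defined for all `t ≥ 0`, remains in `(0,∞)²`, and converges to the boundary
equilibrium `(1, 0)` as `t → ∞`: there exists a global solution with these
properties, and every solution defined for all `t ≥ 0` has them. -/
theorem stmt17
    (x₁ x₂ : ℝ) (hx₁ : 0 < x₁) (hx₂ : 0 < x₂) :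
    (∃ s₁ s₂ : ℝ → ℝ, s₁ 0 = x₁ ∧ s₂ 0 = x₂ ∧
      (∀ t ∈ Set.Ici (0:ℝ),
        HasDerivWithinAt s₁ (-(s₁ t * (3 * s₁ t - 3))) (Set.Ici 0) t ∧
        HasDerivWithinAt s₂ (-(s₂ t * (2 * s₁ t + s₂ t - 1))) (Set.Ici 0) t) ∧
      (∀ t ∈ Set.Ici (0:ℝ), 0 < s₁ t ∧ 0 < s₂ t) ∧
      Filter.Tendsto s₁ Filter.atTop (nhds 1) ∧
      Filter.Tendsto s₂ Filter.atTop (nhds 0))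
    ∧ ∀ s₁ s₂ : ℝ → ℝ, s₁ 0 = x₁ → s₂ 0 = x₂ →
      (∀ t ∈ Set.Ici (0:ℝ),
        HasDerivWithinAt s₁ (-(s₁ t * (3 * s₁ t - 3))) (Set.Ici 0) t ∧
        HasDerivWithinAt s₂ (-(s₂ t * (2 * s₁ t + s₂ t - 1))) (Set.Ici 0) t) →
      ((∀ t ∈ Set.Ici (0:ℝ), 0 < s₁ t ∧ 0 < s₂ t) ∧
        Filter.Tendsto s₁ Filter.atTop (nhds 1) ∧
        Filter.Tendsto s₂ Filter.atTop (nhds 0)) := by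
  constructor
  · refine ⟨Stmt17.S1 x₁, Stmt17.S2 x₁ x₂, Stmt17.S1_zero, Stmt17.S2_zero, ?_, ?_, ?_, ?_⟩
    · intro t ht
      rw [Set.mem_Ici] at ht
      exact ⟨(Stmt17.hasDerivAt_S1 hx₁ ht).hasDerivWithinAt,
        (Stmt17.hasDerivAt_S2 hx₁ hx₂ ht).hasDerivWithinAt⟩
    · intro t ht
      rw [Set.mem_Ici] at ht
      exact ⟨Stmt17.S1_pos hx₁ ht, Stmt17.S2_pos hx₁ hx₂ ht⟩
    · exact Stmt17.tendsto_S1 hx₁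
    · exact Stmt17.tendsto_S2 hx₁ hx₂
  · intro s₁ s₂ h0₁ h0₂ hode
    have heq := Stmt17.solution_eq hx₁ hx₂ s₁ s₂ h0₁ h0₂ hode
    refine ⟨?_, ?_, ?_⟩
    · intro t ht
      obtain ⟨e1, e2⟩ := heq t ht
      rw [Set.mem_Ici] at ht
      rw [e1, e2]
      exact ⟨Stmt17.S1_pos hx₁ ht, Stmt17.S2_pos hx₁ hx₂ ht⟩
    · refine (Stmt17.tendsto_S1 hx₁).congr' ?_
      filter_upwards [Filter.eventually_ge_atTop (0:ℝ)] with t ht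
      exact (heq t ht).1.symm
    · refine (Stmt17.tendsto_S2 hx₁ hx₂).congr' ?_
      filter_upwards [Filter.eventually_ge_atTop (0:ℝ)] with t ht
      exact (heq t ht).2.symm
end
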